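/- arXiv:1611.00824 — 7 statements merged into one kernel-verified Lean document; each statement's English description precedes it below -/
import Mathlib

section
/- Let A be a local ring (not necessarily commutative) whose Jacobson radical r is nilpotent, and let V be a free right A-module of finite rank n > 0. Then every finite linearly independent list of vectors of V can be extended to a basis of V; in particular, any linearly independent list of n vectors of V is already a basis of V, and no linearly independent list of vectors of V has more than n vectors. -/
open Matrix

/-- A family of "nonunits" (in a ring where length-`e` products of nonunits vanish)
has a common nonzero left annihilator. -/
theorem ann_exists {R : Type*} [Ring R] [Nontrivial R] {e : ℕ}
    (he : ∀ l : List R, l.length = e → (∀ x ∈ l, ¬ IsUnit x) → l.prod = 0)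
    {ι : Type*} (S : ι → R) (hS : ∀ i, ¬ IsUnit (S i)) :
    ∃ x : R, x ≠ 0 ∧ ∀ i, x * S i = 0 := by
  classical
  set Q : ℕ → Prop := fun m =>
    ∀ l : List R, l.length = m → (∀ y ∈ l, ∃ i, y = S i) → l.prod = 0 with hQ
  have hQe : Q e := fun l hl hmem =>
    he l hl (fun x hx => by obtain ⟨i, rfl⟩ := hmem x hx; exact hS i)
  have hQex : ∃ m, Q m := ⟨e, hQe⟩
  have hm : Q (Nat.find hQex) := Nat.find_spec hQex
  have hm0 : Nat.find hQex ≠ 0 := by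
    intro h0
    have := hm [] (by simp [h0]) (by simp)
    simp at this
  have hlt : Nat.find hQex - 1 < Nat.find hQex := Nat.sub_lt (Nat.pos_of_ne_zero hm0) one_pos
  have hnQ : ¬ Q (Nat.find hQex - 1) := Nat.find_min hQex hlt
  simp only [hQ] at hnQ
  push_neg at hnQ
  obtain ⟨l, hlen, hmem, hne⟩ := hnQ
  refine ⟨l.prod, hne, fun i => ?_⟩
  have h2 := hm (l ++ [S i])
    (by simp [hlen, Nat.succ_pred_eq_of_pos (Nat.pos_of_ne_zero hm0)])
    (by
      intro y hy
      rcases List.mem_append.mp hy with h | h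
      · exact hmem y h
      · exact ⟨i, by simpa using h⟩)
  simpa using h2

/-- Replacing a basis vector `b p` by `v` still gives a basis, provided the
coordinate of `v` at `p` is a unit. Works over noncommutative rings. -/
theorem basis_update {R V : Type*} [Ring R] [AddCommGroup V] [Module R V]
    {n : Type*} [Fintype n] [DecidableEq n] (b : Module.Basis n R V) (v : V) (p : n)
    (hu : IsUnit (b.repr v p)) :
    ∃ b' : Module.Basis n R V, ∀ i, b' i = Function.update (⇑b) p v i := by
  classical
  set c : n → R := fun i => b.repr v i with hc
  set u : Rˣ := hu.unit with hu'
  have hup : (u : R) = c p := rfl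
  set g : n → V := Function.update (⇑b) p v with hg
  set w : V := ((u⁻¹ : Rˣ) : R) • ((1 + c p) • b p - v) with hw
  set h : n → V := Function.update (⇑b) p w with hh
  set φ : V →ₗ[R] V := Finsupp.linearCombination R g ∘ₗ (b.repr : V →ₗ[R] (n →₀ R)) with hφ
  set ψ : V →ₗ[R] V := Finsupp.linearCombination R h ∘ₗ (b.repr : V →ₗ[R] (n →₀ R)) with hψ
  have key : ∀ (w' : n → V) (i : n),
      (Finsupp.linearCombination R w' ∘ₗ (b.repr : V →ₗ[R] (n →₀ R))) (b i) = w' i := by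
    intro w' i
    simp [Module.Basis.repr_self, Finsupp.linearCombination_single]
  have hφb : ∀ i, φ (b i) = g i := key g
  have hψb : ∀ i, ψ (b i) = h i := key h
  have hv : ∑ i, c i • b i = v := b.sum_repr v
  -- sum of c i • g i
  have hsum_g : ∀ (F : n → V) (z : V), ∑ i, c i • Function.update F p z i
      = (∑ i, c i • F i) - c p • F p + c p • z := by
    intro F z
    have : (fun i => c i • Function.update F p z i)
        = Function.update (fun i => c i • F i) p (c p • z) := by
      funext i
      by_cases hi : i = p
      · subst hi; simp
      · simp [Function.update_of_ne hi]
    rw [this, Finset.sum_update_of_mem (Finset.mem_univ p)]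
    rw [Finset.sum_eq_sum_sdiff_singleton_add (Finset.mem_univ p) (fun i => c i • F i)]
    abel
  -- φ v
  have hφv : φ v = v - c p • b p + c p • v := by
    calc φ v = φ (∑ i, c i • b i) := by rw [hv]
    _ = ∑ i, c i • φ (b i) := by rw [map_sum]; simp_rw [_root_.map_smul]
    _ = ∑ i, c i • g i := by simp_rw [hφb]
    _ = (∑ i, c i • b i) - c p • b p + c p • v := hsum_g ⇑b v
    _ = v - c p • b p + c p • v := by rw [hv]
  -- ψ v
  have hψv : ψ v = b p := by
    have hcu : c p • w = (1 + c p) • b p - v := by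
      have h1 : c p * ((u⁻¹ : Rˣ) : R) = 1 := by rw [← hup, Units.mul_inv]
      rw [hw, smul_smul, h1, one_smul]
    calc ψ v = ψ (∑ i, c i • b i) := by rw [hv]
    _ = ∑ i, c i • ψ (b i) := by rw [map_sum]; simp_rw [_root_.map_smul]
    _ = ∑ i, c i • h i := by simp_rw [hψb]
    _ = (∑ i, c i • b i) - c p • b p + c p • w := hsum_g ⇑b w
    _ = v - c p • b p + ((1 + c p) • b p - v) := by rw [hv, hcu]
    _ = b p := by rw [add_smul, one_smul]; abel
  have hφw : φ w = b p := by
    have : φ w = ((u⁻¹ : Rˣ) : R) • ((1 + c p) • φ (b p) - φ v) := by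
      rw [hw, _root_.map_smul, map_sub, _root_.map_smul]
    rw [this, hφb p, hg, Function.update_self, hφv]
    have h2 : (1 + c p) • v - (v - c p • b p + c p • v) = c p • b p := by
      rw [add_smul, one_smul]; abel
    rw [h2, smul_smul, ← hup, Units.inv_mul, one_smul]
  have hcomp1 : φ ∘ₗ ψ = LinearMap.id := by
    apply b.ext
    intro i
    by_cases hi : i = p
    · simp only [LinearMap.comp_apply, LinearMap.id_apply]
      rw [hi, hψb p, hh, Function.update_self, hφw]
    · simp only [LinearMap.comp_apply, LinearMap.id_apply]
      rw [hψb i, hh, Function.update_of_ne hi, hφb i, hg, Function.update_of_ne hi]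
  have hcomp2 : ψ ∘ₗ φ = LinearMap.id := by
    apply b.ext
    intro i
    by_cases hi : i = p
    · simp only [LinearMap.comp_apply, LinearMap.id_apply]
      rw [hi, hφb p, hg, Function.update_self, hψv]
    · simp only [LinearMap.comp_apply, LinearMap.id_apply]
      rw [hφb i, hg, Function.update_of_ne hi, hψb i, hh, Function.update_of_ne hi]
  refine ⟨b.map (LinearEquiv.ofLinear φ ψ hcomp1 hcomp2), fun i => ?_⟩
  rw [Module.Basis.map_apply]
  exact hφb i

/-- Over a local ring (not necessarily commutative) with nilpotent Jacobson
radical (= the set of non-units), in a free right `A`-module of finite rank `n > 0`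
(right modules are modules over `Aᵐᵒᵖ`), every finite linearly independent list of vectors
extends to a basis indexed by `Fin n`; in particular any independent list has length `≤ n`,
and an independent list of `n` vectors is itself a basis. -/
theorem stmt0 {A V : Type*} [Ring A] [IsLocalRing A]
    (hnil : ∃ e : ℕ, 0 < e ∧
      ∀ l : List A, l.length = e → (∀ x ∈ l, x ∈ nonunits A) → l.prod = 0)
    [AddCommGroup V] [Module Aᵐᵒᵖ V]
    {n : ℕ} (hn : 0 < n) (bV : Module.Basis (Fin n) Aᵐᵒᵖ V)
    {k : ℕ} (f : Fin k → V) (hf : LinearIndependent Aᵐᵒᵖ f) :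
    ∃ (hk : k ≤ n) (b : Module.Basis (Fin n) Aᵐᵒᵖ V),
      ∀ i : Fin k, b (Fin.castLE hk i) = f i := by
  classical
  obtain ⟨e, -, he⟩ := hnil
  -- transfer nilpotency to Aᵐᵒᵖ
  have he' : ∀ l : List Aᵐᵒᵖ, l.length = e → (∀ x ∈ l, ¬ IsUnit x) → l.prod = 0 := by
    intro l hl hmem
    have h0 : l.prod.unop = 0 := by
      rw [MulOpposite.unop_list_prod]
      apply he
      · simp [hl]
      · intro y hy
        rw [List.mem_reverse, List.mem_map] at hy
        obtain ⟨x, hxl, rfl⟩ := hy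
        rw [mem_nonunits_iff]
        exact fun h => hmem x hxl (isUnit_unop.mp h)
    rw [← MulOpposite.unop_zero] at h0
    exact MulOpposite.unop_injective h0
  induction k with
  | zero => exact ⟨Nat.zero_le n, bV, fun i => i.elim0⟩
  | succ k ih =>
    obtain ⟨hk, b, hb⟩ := ih (f ∘ Fin.castSucc)
      (hf.comp Fin.castSucc (Fin.castSucc_injective k))
    set c : Fin n →₀ Aᵐᵒᵖ := b.repr (f (Fin.last k)) with hcdef
    by_cases hex : ∃ j : Fin n, k ≤ j.val ∧ IsUnit (c j)
    · obtain ⟨j, hkj, hu⟩ := hex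
      have hkn : k < n := lt_of_le_of_lt hkj j.isLt
      set p : Fin n := ⟨k, hkn⟩ with hp
      set b2 := b.reindex (Equiv.swap p j) with hb2def
      have hpv : (p : ℕ) = k := rfl
      have hb2 : ∀ i : Fin n, i.val < k → b2 i = b i := by
        intro i hi
        have hip : i ≠ p := Fin.ne_of_val_ne (by rw [hpv]; omega)
        have hij : i ≠ j := Fin.ne_of_val_ne (by omega)
        rw [hb2def, Module.Basis.reindex_apply, Equiv.symm_swap,
          Equiv.swap_apply_of_ne_of_ne hip hij]
      have hu2 : IsUnit (b2.repr (f (Fin.last k)) p) := by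
        rw [hb2def, Module.Basis.repr_reindex_apply]
        simpa using hu
      obtain ⟨b3, hb3⟩ := basis_update b2 (f (Fin.last k)) p hu2
      refine ⟨hkn, b3, fun i => ?_⟩
      rcases Nat.lt_or_ge i.val k with hik | hik
      · have hne : Fin.castLE hkn i ≠ p := by
          intro h
          have := congrArg Fin.val h
          simp [hp] at this; omega
        rw [hb3, Function.update_of_ne hne, hb2 _ hik]
        have h2 := hb ⟨i.val, hik⟩
        have h3 : Fin.castLE hk ⟨i.val, hik⟩ = Fin.castLE hkn i := by
          apply Fin.ext; simp
        have h4 : (f ∘ Fin.castSucc) ⟨i.val, hik⟩ = f i := by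
          simp only [Function.comp_apply]
          apply congrArg; apply Fin.ext; simp
        rw [h3, h4] at h2
        exact h2
      · have hik' : i.val = k := by omega
        have hpe : Fin.castLE hkn i = p := by apply Fin.ext; simp [hp, hik']
        rw [hb3, hpe, Function.update_self]
        apply congrArg; apply Fin.ext; simp [Fin.last, hik']
    · push_neg at hex
      exfalso
      obtain ⟨x, hx0, hxc⟩ := ann_exists he'
        (S := fun j : {j : Fin n // k ≤ j.val} => c j.1) (fun j => hex j.1 j.2)
      set a : Fin (k + 1) → Aᵐᵒᵖ := fun i =>
        if h : i.val < k then -(x * c (Fin.castLE hk ⟨i.val, h⟩)) else x with ha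
      set F : Fin n → V := fun j => (x * c j) • b j with hF
      have hFz : ∀ j : Fin n, k ≤ j.val → F j = 0 := by
        intro j hj
        rw [hF]
        simp [hxc ⟨j, hj⟩]
      have hsum : ∑ i, a i • f i = 0 := by
        rw [Fin.sum_univ_castSucc]
        have h1 : ∀ i : Fin k, a i.castSucc • f i.castSucc
            = -F (Fin.castLE hk i) := by
          intro i
          have h2 : a i.castSucc = -(x * c (Fin.castLE hk i)) := by
            have hlt : (i.castSucc : Fin (k+1)).val < k := i.isLt
            have heq : Fin.castLE hk ⟨(i.castSucc : Fin (k+1)).val, hlt⟩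
                = Fin.castLE hk i := by apply Fin.ext; simp
            simp only [ha]
            rw [dif_pos hlt, heq]
          have h3 : f i.castSucc = b (Fin.castLE hk i) := (hb i).symm
          rw [h2, h3, hF, neg_smul]
        have h4 : a (Fin.last k) = x := by rw [ha]; simp
        have h5 : a (Fin.last k) • f (Fin.last k) = ∑ j : Fin n, F j := by
          rw [h4, ← b.sum_repr (f (Fin.last k)), Finset.smul_sum]
          apply Finset.sum_congr rfl
          intro j _
          rw [hF, smul_smul]
        simp_rw [h1]
        rw [h5]
        rw [Finset.sum_neg_distrib]
        -- ∑ over Fin k of F (castLE i) = ∑ over Fin n of F j since F vanishes off the image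
        have h6 : ∑ i : Fin k, F (Fin.castLE hk i) = ∑ j : Fin n, F j := by
          have e1 : ∑ i : Fin k, F (Fin.castLE hk i)
              = ∑ j ∈ Finset.univ.map (Fin.castLEEmb hk), F j :=
            (Finset.sum_map Finset.univ (Fin.castLEEmb hk) F).symm
          rw [e1]
          apply Finset.sum_subset (Finset.subset_univ _)
          intro j _ hj
          apply hFz
          by_contra hcon
          push_neg at hcon
          exact hj (by
            simp only [Finset.mem_map, Finset.mem_univ, true_and]
            exact ⟨⟨j.val, hcon⟩, by apply Fin.ext; simp⟩)
        rw [h6]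
        abel
      have := Fintype.linearIndependent_iff.mp hf a hsum (Fin.last k)
      apply hx0
      rw [ha] at this
      simpa using this
end

section
/- Let A be a local ring with involution * such that 2 is a unit of A and a − a* lies in the Jacobson radical r for every a ∈ A. Let J ∈ M_n(A) be an invertible skew-hermitian matrix (Jᴴ = −J). Then for every index i with 1 ≤ i ≤ n there exists an index j ≠ i such that the entry J_{ij} is a unit of A. -/
open Matrix

/-- In a (possibly noncommutative) local ring, an idempotent is `0` or `1`. -/
lemma idem_eq_zero_or_one {A : Type*} [Ring A] [IsLocalRing A] {e : A}
    (he : e * e = e) : e = 0 ∨ e = 1 := by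
  have hadd : e + (1 - e) = 1 := by abel
  rcases IsLocalRing.isUnit_or_isUnit_of_add_one hadd with h | h
  · right
    exact h.mul_left_cancel (by rw [mul_one, he])
  · left
    have hidem : (1 - e) * (1 - e) = 1 - e := by
      have expand : (1 - e) * (1 - e) = 1 - e - e + e * e := by noncomm_ring
      rw [expand, he]; abel
    have h1 : (1 : A) - e = 1 := h.mul_left_cancel (by rw [mul_one, hidem])
    exact sub_eq_self.mp h1

/-- In a (possibly noncommutative) local ring, a left multiple of a nonunit is a nonunit. -/
lemma nonunit_mul_right {A : Type*} [Ring A] [IsLocalRing A] {a : A}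
    (ha : a ∈ nonunits A) (b : A) : a * b ∈ nonunits A := by
  intro hu
  obtain ⟨u, hu⟩ := hu
  set c : A := b * ↑u⁻¹ with hc
  have hac : a * c = 1 := by
    rw [hc, ← mul_assoc, ← hu, Units.mul_inv]
  have hidem : (c * a) * (c * a) = c * a := by
    rw [mul_assoc, ← mul_assoc a c a, hac, one_mul]
  rcases idem_eq_zero_or_one hidem with h | h
  · -- c * a = 0 forces a = 0, contradicting a * c = 1
    have ha0 : a = 0 := by
      have : a * (c * a) = a := by rw [← mul_assoc, hac, one_mul]
      rw [h, mul_zero] at this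
      exact this.symm
    rw [ha0, zero_mul] at hac
    exact one_ne_zero hac.symm
  · exact ha ⟨⟨a, c, hac, h⟩, rfl⟩

/-- In a (possibly noncommutative) local ring, a right multiple of a nonunit is a nonunit. -/
lemma nonunit_mul_left {A : Type*} [Ring A] [IsLocalRing A] {a : A}
    (ha : a ∈ nonunits A) (b : A) : b * a ∈ nonunits A := by
  intro hu
  obtain ⟨u, hu⟩ := hu
  set c : A := ↑u⁻¹ * b with hc
  have hca : c * a = 1 := by
    rw [hc, mul_assoc, ← hu, Units.inv_mul]
  have hidem : (a * c) * (a * c) = a * c := by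
    rw [mul_assoc, ← mul_assoc c a c, hca, one_mul]
  rcases idem_eq_zero_or_one hidem with h | h
  · have ha0 : a = 0 := by
      have : (a * c) * a = a := by rw [mul_assoc, hca, mul_one]
      rw [h, zero_mul] at this
      exact this.symm
    rw [ha0, mul_zero] at hca
    exact one_ne_zero hca.symm
  · exact ha ⟨⟨a, c, h, hca⟩, rfl⟩

/-- In a (possibly noncommutative) local ring, the sum of two nonunits is a nonunit. -/
lemma nonunits_add' {A : Type*} [Ring A] [IsLocalRing A] {a b : A}
    (ha : a ∈ nonunits A) (hb : b ∈ nonunits A) : a + b ∈ nonunits A := by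
  intro hu
  obtain ⟨u, hu⟩ := hu
  have h1 : (↑u⁻¹ : A) * a + (↑u⁻¹ : A) * b = 1 := by
    rw [← mul_add, ← hu, Units.inv_mul]
  rcases IsLocalRing.isUnit_or_isUnit_of_add_one h1 with h | h
  · exact nonunit_mul_left ha (↑u⁻¹ : A) h
  · exact nonunit_mul_left hb (↑u⁻¹ : A) h

lemma sum_nonunits {A : Type*} [Ring A] [IsLocalRing A] {ι : Type*} (s : Finset ι)
    (f : ι → A) (h : ∀ j ∈ s, f j ∈ nonunits A) : ∑ j ∈ s, f j ∈ nonunits A := by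
  classical
  induction s using Finset.induction_on with
  | empty => rw [Finset.sum_empty]; exact fun hu => hu.ne_zero rfl
  | insert _ _ hx ih =>
    rw [Finset.sum_insert hx]
    exact nonunits_add' (h _ (Finset.mem_insert_self _ _))
      (ih fun j hj => h j (Finset.mem_insert_of_mem hj))

/-- Let `A` be a local ring (not necessarily commutative) with an involution `*`
(a `StarRing` structure) such that `2` is a unit and `a - a*` is a non-unit (i.e. lies in the
Jacobson radical) for every `a`.  If `J ∈ M_n(A)` is an invertible skew-hermitian matrix
(`Jᴴ = -J`), then for every row index `i` there is a column index `j ≠ i` such that the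
entry `J i j` is a unit of `A`. -/
theorem stmt2 {A : Type*} [Ring A] [StarRing A] [IsLocalRing A]
    (h2 : IsUnit (2 : A)) (hsk : ∀ a : A, a - star a ∈ nonunits A)
    {n : ℕ} (J : Matrix (Fin n) (Fin n) A) (hJ : IsUnit J) (hsh : Jᴴ = -J)
    (i : Fin n) :
    ∃ j : Fin n, j ≠ i ∧ IsUnit (J i j) := by
  -- diagonal entry is a nonunit
  have hstar : star (J i i) = -(J i i) := by
    have := congrFun (congrFun hsh i) i
    simpa [conjTranspose_apply] using this
  have hdiag : J i i ∈ nonunits A := by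
    intro hu
    have h2J : J i i - star (J i i) = 2 * J i i := by
      rw [hstar, sub_neg_eq_add, two_mul]
    exact hsk (J i i) (h2J ▸ h2.mul hu)
  -- row i has a unit entry
  obtain ⟨U, hU⟩ := hJ
  have hmul := U.mul_inv
  have hone : ∑ j, J i j * (U⁻¹ : (Matrix (Fin n) (Fin n) A)ˣ).val j i = 1 := by
    have h0 := congrFun (congrFun hmul i) i
    rw [hU, Matrix.mul_apply] at h0
    rwa [Matrix.one_apply_eq] at h0
  by_contra hcon
  push_neg at hcon
  have hall : ∀ j : Fin n, J i j ∈ nonunits A := by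
    intro j
    by_cases hji : j = i
    · exact hji ▸ hdiag
    · exact fun hu => (hcon j hji) hu
  have hbad : (1 : A) ∈ nonunits A := by
    rw [← hone]
    exact sum_nonunits _ _ fun j _ => nonunit_mul_right (hall j) _
  exact hbad isUnit_one
end

section
/- Let A be a local ring with involution * such that 2 is a unit, a − a* lies in the Jacobson radical r for every a ∈ A, and r is nilpotent. Let J ∈ M_n(A) be an invertible skew-hermitian matrix, let I be a proper two-sided ideal of A, and let v ∈ A^n be a unimodular column vector whose length vᴴJv lies in I. Then there exists a unimodular vector z ∈ A^n such that z ≡ v coordinatewise modulo I and zᴴJz = 0. -/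
open Matrix

section Aux

variable {A : Type*} [Ring A] [IsLocalRing A]

lemma aux_unit_of_mul_eq_one {x y : A} (h : x * y = 1) : IsUnit x ∧ IsUnit y := by
  have hsum : y * x + (1 - y * x) = 1 := by abel
  have hid : (y * x) * (y * x) = y * x := by
    rw [mul_assoc y x (y * x), ← mul_assoc x y x, h, one_mul]
  rcases IsLocalRing.isUnit_or_isUnit_of_add_one hsum with h1 | h1
  · have h3 : y * x = 1 := h1.mul_left_cancel (by rw [hid, mul_one])
    exact ⟨⟨⟨x, y, h, h3⟩, rfl⟩, ⟨⟨y, x, h3, h⟩, rfl⟩⟩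
  · have h0 : (1 - y * x) * y = 0 := by
      rw [sub_mul, one_mul, mul_assoc, h, mul_one, sub_self]
    have hy0 : y = 0 := h1.mul_left_cancel (by rw [h0, mul_zero])
    rw [hy0, mul_zero] at h
    exact absurd h.symm one_ne_zero

lemma aux_nonunit_mul_left {x : A} (hx : x ∈ nonunits A) (b : A) : b * x ∈ nonunits A := by
  intro hbx
  obtain ⟨u, hu⟩ := hbx
  exact hx (aux_unit_of_mul_eq_one (x := ↑u⁻¹ * b) (y := x)
    (by rw [mul_assoc, ← hu, Units.inv_mul])).2

lemma aux_nonunit_mul_right {x : A} (hx : x ∈ nonunits A) (b : A) : x * b ∈ nonunits A := by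
  intro hxb
  obtain ⟨u, hu⟩ := hxb
  exact hx (aux_unit_of_mul_eq_one (x := x) (y := b * ↑u⁻¹)
    (by rw [← mul_assoc, ← hu, Units.mul_inv])).1

lemma aux_nonunits_add {a b : A} (ha : a ∈ nonunits A) (hb : b ∈ nonunits A) :
    a + b ∈ nonunits A := by
  intro h
  obtain ⟨u, hu⟩ := h
  have h1 : a * ↑u⁻¹ + b * ↑u⁻¹ = 1 := by rw [← add_mul, ← hu, Units.mul_inv]
  rcases IsLocalRing.isUnit_or_isUnit_of_add_one h1 with h2 | h2
  · exact aux_nonunit_mul_right ha _ h2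
  · exact aux_nonunit_mul_right hb _ h2

lemma aux_nonunits_sum {ι : Type*} (s : Finset ι) (f : ι → A)
    (h : ∀ i ∈ s, f i ∈ nonunits A) : (∑ i ∈ s, f i) ∈ nonunits A := by
  classical
  induction s using Finset.induction_on with
  | empty => exact (by simpa using zero_mem_nonunits.2 zero_ne_one)
  | insert _ _ hns ih =>
      rw [Finset.sum_insert hns]
      exact aux_nonunits_add (h _ (Finset.mem_insert_self _ _))
        (ih fun i hi => h i (Finset.mem_insert_of_mem hi))

lemma aux_unit_add {u m : A} (hu : IsUnit u) (hm : m ∈ nonunits A) : IsUnit (u + m) := by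
  by_contra h
  have h2 : u + m + -m ∈ nonunits A :=
    aux_nonunits_add h (fun hmu => hm (by simpa using hmu.neg))
  simp only [add_neg_cancel_right] at h2
  exact h2 hu

end Aux

/-- Let `A` be a local ring with involution `*` such that `2` is a unit,
`a - a*` is a non-unit (lies in the Jacobson radical) for every `a`, and the Jacobson
radical (= the set of non-units) is nilpotent.  Let `J ∈ M_n(A)` be an invertible
skew-hermitian matrix, `I` a proper two-sided ideal of `A`, and `v ∈ Aⁿ` a unimodular
column vector whose length `vᴴJv = star v ⬝ᵥ J.mulVec v` lies in `I`.  Then there is a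
unimodular vector `z` with `z ≡ v` coordinatewise mod `I` and `zᴴJz = 0`. -/
theorem stmt3 {A : Type*} [Ring A] [StarRing A] [IsLocalRing A]
    (h2 : IsUnit (2 : A)) (hsk : ∀ a : A, a - star a ∈ nonunits A)
    (hnil : ∃ e : ℕ, 0 < e ∧
      ∀ l : List A, l.length = e → (∀ x ∈ l, x ∈ nonunits A) → l.prod = 0)
    {n : ℕ} (J : Matrix (Fin n) (Fin n) A) (hJ : IsUnit J) (hsh : Jᴴ = -J)
    (I : TwoSidedIdeal A) (hI : I ≠ ⊤)
    (v : Fin n → A) (hv : ∃ i, IsUnit (v i))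
    (hlen : star v ⬝ᵥ J.mulVec v ∈ I) :
    ∃ z : Fin n → A, (∃ i, IsUnit (z i)) ∧ (∀ i, z i - v i ∈ I) ∧
      star z ⬝ᵥ J.mulVec z = 0 := by
  classical
  obtain ⟨e, he, hprod⟩ := hnil
  -- elements of I are nonunits
  have hInon : ∀ x ∈ I, x ∈ nonunits A := by
    intro x hx hux
    refine hI (I.eq_top ?_)
    obtain ⟨u, hu⟩ := hux
    have h1 := I.mul_mem_right x (↑u⁻¹) hx
    rwa [show x * (↑u⁻¹ : A) = 1 by rw [← hu, Units.mul_inv]] at h1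
  -- the half element
  obtain ⟨u2, hu2⟩ := h2
  set h : A := ↑u2⁻¹ with hdef
  have h2h : (2 : A) * h = 1 := by rw [hdef, ← hu2]; exact u2.mul_inv
  have hh2 : h * (2 : A) = 1 := by rw [hdef, ← hu2]; exact u2.inv_mul
  have hcomm : ∀ x : A, x * h = h * x := by
    intro x
    calc x * h = (h * 2) * (x * h) := by rw [hh2, one_mul]
      _ = h * ((2 * x) * h) := by rw [mul_assoc, ← mul_assoc 2 x h]
      _ = h * ((x * 2) * h) := by rw [two_mul, mul_two]
      _ = h * x * (2 * h) := by rw [← mul_assoc, ← mul_assoc, mul_assoc (h*x) 2 h]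
      _ = h * x := by rw [h2h, mul_one]
  have hhh : h + h = 1 := by rw [← mul_two]; exact hh2
  have hs2 : star (2 : A) = 2 := by
    rw [show (2 : A) = 1 + 1 from one_add_one_eq_two.symm]; simp
  have hstarh : star h = h := by
    have e1 : star h * 2 = 1 := by rw [← hs2, ← StarMul.star_mul, h2h, star_one]
    calc star h = star h * 1 := (mul_one _).symm
      _ = star h * (2 * h) := by rw [h2h]
      _ = (star h * 2) * h := (mul_assoc _ _ _).symm
      _ = h := by rw [e1, one_mul]
  -- skew swap lemma
  have hswap : ∀ x y : Fin n → A,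
      star (star x ⬝ᵥ J *ᵥ y) = -(star y ⬝ᵥ J *ᵥ x) := by
    intro x y
    rw [star_dotProduct, star_star, star_mulVec, hsh, ← dotProduct_mulVec,
      neg_mulVec, dotProduct_neg]
  -- scalar helpers
  have hdotr : ∀ (x y : Fin n → A) (t : A),
      x ⬝ᵥ (fun i => y i * t) = (x ⬝ᵥ y) * t := by
    intro x y t; simp [dotProduct, Finset.sum_mul, mul_assoc]
  have hdotl : ∀ (c : A) (x y : Fin n → A),
      (fun i => c * x i) ⬝ᵥ y = c * (x ⬝ᵥ y) := by
    intro c x y; simp [dotProduct, Finset.mul_sum, mul_assoc]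
  have hmulr : ∀ (y : Fin n → A) (t : A),
      J *ᵥ (fun k => y k * t) = fun i => (J *ᵥ y) i * t := by
    intro y t; funext i; simp [mulVec, dotProduct, Finset.sum_mul, mul_assoc]
  -- the key step
  have step : ∀ (z : Fin n → A) (m : ℕ), (∃ i, IsUnit (z i)) → (∀ i, z i - v i ∈ I) →
      (star z ⬝ᵥ J *ᵥ z) ∈ I →
      (∃ x y : A, ∃ l : List A, m ≤ l.length ∧ (∀ c ∈ l, c ∈ nonunits A) ∧
        star z ⬝ᵥ J *ᵥ z = x * l.prod * y) →
      ∃ z' : Fin n → A, (∃ i, IsUnit (z' i)) ∧ (∀ i, z' i - v i ∈ I) ∧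
        (star z' ⬝ᵥ J *ᵥ z') ∈ I ∧
        (∃ x y : A, ∃ l : List A, m + 1 ≤ l.length ∧ (∀ c ∈ l, c ∈ nonunits A) ∧
          star z' ⬝ᵥ J *ᵥ z' = x * l.prod * y) := by
    intro z m hz hzv haI hQ
    -- find a unit entry in the row star z ᵥ* J
    have hrow : ∃ j, IsUnit ((star z ᵥ* J) j) := by
      by_contra hcon
      push_neg at hcon
      obtain ⟨i0, hi0⟩ := hz
      obtain ⟨uJ, huJ⟩ := hJ
      have hKey : (star z ᵥ* J) ᵥ* uJ⁻¹.val = star z := by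
        rw [vecMul_vecMul, ← huJ, Units.mul_inv, vecMul_one]
      have hsum : star z i0 =
          ∑ jj, (star z ᵥ* J) jj * uJ⁻¹.val jj i0 := by
        conv_lhs => rw [← hKey]
        rfl
      have hnon : star z i0 ∈ nonunits A := by
        rw [hsum]
        exact aux_nonunits_sum _ _ fun jj _ =>
          aux_nonunit_mul_right (hcon jj) _
      exact hnon (isUnit_star.2 hi0)
    obtain ⟨j, hcj⟩ := hrow
    obtain ⟨cu, hcu⟩ := hcj
    set w : Fin n → A := Pi.single j ↑cu⁻¹ with hwdef
    have hw1 : star z ⬝ᵥ J *ᵥ w = 1 := by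
      rw [dotProduct_mulVec, hwdef, dotProduct_single, ← hcu, Units.mul_inv]
    have hwz : star w ⬝ᵥ J *ᵥ z = -1 := by
      have hs := hswap z w
      rw [hw1, star_one] at hs
      have h' := congrArg Neg.neg hs
      simp only [neg_neg] at h'
      exact h'.symm
    have hska : star (star z ⬝ᵥ J *ᵥ z) = -(star z ⬝ᵥ J *ᵥ z) := hswap z z
    have hbnon : (star w ⬝ᵥ J *ᵥ w) ∈ nonunits A := by
      have hb' := hsk (star w ⬝ᵥ J *ᵥ w)
      rw [hswap w w, sub_neg_eq_add] at hb'
      have heq : h * ((star w ⬝ᵥ J *ᵥ w) + (star w ⬝ᵥ J *ᵥ w)) = star w ⬝ᵥ J *ᵥ w := by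
        rw [← two_mul, ← mul_assoc, hh2, one_mul]
      rw [← heq]
      exact aux_nonunit_mul_left hb' h
    set t : A := -((star z ⬝ᵥ J *ᵥ z) * h) with ht
    have htI : t ∈ I := I.neg_mem (I.mul_mem_right _ _ haI)
    have hstart : star t = -t := by
      rw [ht, star_neg, StarMul.star_mul, hstarh, hska, mul_neg, neg_neg, neg_neg]
      exact (hcomm _).symm
    have ha0 : (star z ⬝ᵥ J *ᵥ z) + t + t = 0 := by
      rw [ht]
      have e1 : (star z ⬝ᵥ J *ᵥ z) * h + (star z ⬝ᵥ J *ᵥ z) * h = star z ⬝ᵥ J *ᵥ z := by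
        rw [← mul_add, hhh, mul_one]
      have e2 : (star z ⬝ᵥ J *ᵥ z) + -((star z ⬝ᵥ J *ᵥ z) * h) + -((star z ⬝ᵥ J *ᵥ z) * h)
          = (star z ⬝ᵥ J *ᵥ z) - ((star z ⬝ᵥ J *ᵥ z) * h + (star z ⬝ᵥ J *ᵥ z) * h) := by
        abel
      rw [e2, e1, sub_self]
    set z' : Fin n → A := fun k => z k + w k * t with hz'def
    have hz'v : ∀ i, z' i - v i ∈ I := by
      intro i
      have e3 : z' i - v i = (z i - v i) + w i * t := by
        simp only [hz'def]; abel
      rw [e3]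
      exact I.add_mem (hzv i) (I.mul_mem_left _ _ htI)
    have hz'u : ∃ i, IsUnit (z' i) := by
      obtain ⟨i0, hi0⟩ := hv
      refine ⟨i0, ?_⟩
      have e4 : z' i0 = v i0 + (z' i0 - v i0) := by abel
      rw [e4]
      exact aux_unit_add hi0 (hInon _ (hz'v i0))
    -- the length computation
    have h1 : J *ᵥ z' = J *ᵥ z + fun i => (J *ᵥ w) i * t := by
      rw [show z' = z + fun k => w k * t from rfl, mulVec_add, hmulr]
    have h2' : star z' = star z + fun k => star t * star w k := by
      funext k
      show star (z k + w k * t) = star (z k) + star t * star (w k)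
      rw [star_add, StarMul.star_mul]
    have hE : star z' ⬝ᵥ J *ᵥ z' = star t * ((star w ⬝ᵥ J *ᵥ w) * t) := by
      have haa : star z ⬝ᵥ J *ᵥ z = -(t + t) := by
        rw [add_assoc] at ha0
        exact eq_neg_of_add_eq_zero_left ha0
      rw [h2', h1]
      simp only [add_dotProduct, dotProduct_add, hdotr, hdotl]
      rw [hw1, hwz, hstart, haa]
      noncomm_ring
    have hE' : (star z' ⬝ᵥ J *ᵥ z') ∈ I := by
      rw [hE]
      exact I.mul_mem_left _ _ (I.mul_mem_left _ _ htI)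
    obtain ⟨x, y, l, hlm, hlnon, hxy⟩ := hQ
    refine ⟨z', hz'u, hz'v, hE',
      -x, y * h, l ++ (y * h * (star w ⬝ᵥ J *ᵥ w) * x) :: l, ?_, ?_, ?_⟩
    · simp only [List.length_append, List.length_cons]; omega
    · intro c hc
      rcases List.mem_append.1 hc with hc | hc
      · exact hlnon _ hc
      · rcases List.mem_cons.1 hc with rfl | hc
        · exact aux_nonunit_mul_right (aux_nonunit_mul_left hbnon (y * h)) x
        · exact hlnon _ hc
    · rw [hE, hstart, ht, hxy, List.prod_append, List.prod_cons]
      simp only [neg_mul, mul_neg, neg_neg, mul_assoc]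
  -- the main induction
  have main : ∀ d : ℕ, ∀ z : Fin n → A, (∃ i, IsUnit (z i)) → (∀ i, z i - v i ∈ I) →
      (star z ⬝ᵥ J *ᵥ z) ∈ I →
      (∃ x y : A, ∃ l : List A, e - d ≤ l.length ∧ (∀ c ∈ l, c ∈ nonunits A) ∧
        star z ⬝ᵥ J *ᵥ z = x * l.prod * y) →
      ∃ z' : Fin n → A, (∃ i, IsUnit (z' i)) ∧ (∀ i, z' i - v i ∈ I) ∧
        star z' ⬝ᵥ J *ᵥ z' = 0 := by
    intro d
    induction d with
    | zero =>
      intro z hz1 hz2 _ hQ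
      obtain ⟨x, y, l, hlm, hlnon, hxy⟩ := hQ
      have hl0 : (l.take e).prod = 0 :=
        hprod _ (by rw [List.length_take]; omega)
          (fun c hc => hlnon c (List.mem_of_mem_take hc))
      refine ⟨z, hz1, hz2, ?_⟩
      rw [hxy, ← List.prod_take_mul_prod_drop l e, hl0, zero_mul, mul_zero, zero_mul]
    | succ d ih =>
      intro z hz1 hz2 hz3 hQ
      obtain ⟨z', h1, h2', h3, hQ'⟩ := step z (e - (d + 1)) hz1 hz2 hz3 hQ
      apply ih z' h1 h2' h3
      obtain ⟨x, y, l, hlm, hlnon, hxy⟩ := hQ'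
      exact ⟨x, y, l, by omega, hlnon, hxy⟩
  exact main e v hv (fun i => by simpa using I.zero_mem) hlen
    ⟨star v ⬝ᵥ J *ᵥ v, 1, [], by simp, by simp, by simp⟩
end

section
/- Let A be a local ring with involution * such that 2 is a unit, a − a* lies in the Jacobson radical r for every a ∈ A, and r is nilpotent. Let m ≥ 1 and let u, v ∈ A^{2m} be unimodular column vectors with equal lengths uᴴJ₀u = vᴴJ₀v. Then there exists a matrix X ∈ M_{2m}(A) with XᴴJ₀X = J₀ such that X·u = v. In other words, the unitary group U_{2m}(A) acts transitively on unimodular vectors of a given length. -/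
open Matrix

/-- The standard symplectic matrix `J₀ ∈ M_{2m}(A)`: the 2×2 block matrix
`[[0, I_m], [-I_m, 0]]` with `m × m` blocks. -/
def stdSymplectic (A : Type*) [Ring A] (m : ℕ) : Matrix (Fin (2 * m)) (Fin (2 * m)) A :=
  Matrix.of fun i j =>
    if (i : ℕ) + m = (j : ℕ) then (1 : A)
    else if (j : ℕ) + m = (i : ℕ) then (-1 : A) else 0

namespace Stmt7Aux

variable {A : Type*} [Ring A] [StarRing A]

section Good

variable {n : Type*} [Fintype n] [DecidableEq n]

/-- `X` is unitary for `J` with explicit two-sided inverse `X'`. -/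
def Good (J X X' : Matrix n n A) : Prop :=
  X * X' = 1 ∧ X' * X = 1 ∧ Xᴴ * J * X = J

theorem Good.inv {J X X' : Matrix n n A} (h : Good J X X') : Good J X' X := by
  obtain ⟨h1, h2, h3⟩ := h
  refine ⟨h2, h1, ?_⟩
  calc X'ᴴ * J * X' = X'ᴴ * (Xᴴ * J * X) * X' := by rw [h3]
    _ = (X * X')ᴴ * J * (X * X') := by
        simp only [conjTranspose_mul, Matrix.mul_assoc]
    _ = J := by rw [h1]; simp

theorem Good.mul {J X X' Y Y' : Matrix n n A} (hX : Good J X X') (hY : Good J Y Y') :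
    Good J (X * Y) (Y' * X') := by
  obtain ⟨a1, a2, a3⟩ := hX
  obtain ⟨b1, b2, b3⟩ := hY
  refine ⟨?_, ?_, ?_⟩
  · calc X * Y * (Y' * X') = X * (Y * Y') * X' := by
          simp only [Matrix.mul_assoc]
      _ = 1 := by rw [b1]; simp [a1]
  · calc Y' * X' * (X * Y) = Y' * (X' * X) * Y := by
          simp only [Matrix.mul_assoc]
      _ = 1 := by rw [a2]; simp [b2]
  · calc (X * Y)ᴴ * J * (X * Y) = Yᴴ * (Xᴴ * J * X) * Y := by
          simp only [conjTranspose_mul, Matrix.mul_assoc]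
      _ = J := by rw [a3, b3]

theorem Good.len {J X X' : Matrix n n A} (h : Good J X X') (u : n → A) :
    star (X *ᵥ u) ⬝ᵥ J *ᵥ (X *ᵥ u) = star u ⬝ᵥ J *ᵥ u := by
  rw [star_mulVec, dotProduct_mulVec, vecMul_vecMul, dotProduct_mulVec, vecMul_vecMul,
    h.2.2, ← dotProduct_mulVec]

/-- permutation matrix -/
def pm (σ : Equiv.Perm n) : Matrix n n A :=
  Matrix.of fun i j => if σ j = i then 1 else 0

theorem pm_mulVec (σ : Equiv.Perm n) (x : n → A) :
    (pm σ : Matrix n n A) *ᵥ x = fun i => x (σ⁻¹ i) := by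
  funext i
  simp only [pm, mulVec, dotProduct, of_apply, ite_mul, one_mul, zero_mul]
  rw [Fintype.sum_eq_single (σ⁻¹ i)]
  · simp
  · intro j hj
    rw [if_neg]
    intro hc
    exact hj (by rw [← hc]; simp)

theorem pm_mul (σ τ : Equiv.Perm n) :
    (pm σ : Matrix n n A) * pm τ = pm (σ * τ) := by
  ext i k
  rw [mul_apply, Fintype.sum_eq_single (τ k)]
  · simp [pm, Equiv.Perm.mul_apply]
    rfl
  · intro j hj
    simp [pm, Ne.symm hj]

theorem pm_one : (pm 1 : Matrix n n A) = 1 := by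
  ext i j
  simp [pm, Matrix.one_apply, eq_comm]

theorem pm_mul_pm_inv (σ : Equiv.Perm n) :
    (pm σ : Matrix n n A) * pm σ⁻¹ = 1 ∧ (pm σ⁻¹ : Matrix n n A) * pm σ = 1 := by
  constructor <;> rw [pm_mul] <;> simp [pm_one]

/-- elementary "column clearing" matrix -/
def cl (z0 : n) (w : n → A) : Matrix n n A :=
  1 + Matrix.of (fun j k => if k = z0 then w j else 0)

theorem cl_mul_cl (z0 : n) (w w' : n → A) (hw' : w' z0 = 0) :
    cl z0 w * cl z0 w' = cl z0 (w + w') := by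
  have hC : (Matrix.of (fun j k => if k = z0 then w j else 0) : Matrix n n A) *
      Matrix.of (fun j k => if k = z0 then w' j else 0) = 0 := by
    ext j k
    rw [mul_apply, Fintype.sum_eq_single z0]
    · simp [hw']
    · intro l hl
      simp [hl]
  have h1 : (Matrix.of (fun j k => if k = z0 then (w + w') j else 0) : Matrix n n A) =
      Matrix.of (fun j k => if k = z0 then w j else 0) +
        Matrix.of (fun j k => if k = z0 then w' j else 0) := by
    ext j k
    by_cases h : k = z0 <;> simp [h]
  simp only [cl, Matrix.mul_add, Matrix.add_mul, Matrix.one_mul, Matrix.mul_one, hC, h1]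
  abel

theorem cl_mulVec (z0 : n) (w : n → A) (x : n → A) :
    cl z0 w *ᵥ x = fun j => x j + w j * x z0 := by
  funext j
  simp only [cl, add_mulVec, one_mulVec, Pi.add_apply]
  congr 1
  simp only [mulVec, dotProduct, of_apply, ite_mul, zero_mul]
  rw [Fintype.sum_eq_single z0]
  · simp
  · intro k hk
    simp [hk]

theorem cl_inv (z0 : n) (w : n → A) (hw : w z0 = 0) :
    cl z0 w * cl z0 (-w) = 1 ∧ cl z0 (-w) * cl z0 w = 1 := by
  have h0 : cl z0 (0 : n → A) = 1 := by
    ext j k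
    simp [cl]
  constructor
  · rw [cl_mul_cl z0 w (-w) (by simp [hw])]; simp [h0]
  · rw [cl_mul_cl z0 (-w) w hw]; simp [h0]

/-- transitivity of GL on vectors with a unit coordinate -/
theorem gl_trans (z0 i0 : n) (x : n → A) (hx : IsUnit (x i0)) :
    ∃ g g' : Matrix n n A, g * g' = 1 ∧ g' * g = 1 ∧ g *ᵥ x = Pi.single z0 1 := by
  classical
  set σ : Equiv.Perm n := Equiv.swap z0 i0 with hσ
  set r : A := ↑hx.unit⁻¹ with hr
  set D : Matrix n n A := diagonal (fun k => if k = z0 then r else 1) with hD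
  set D' : Matrix n n A := diagonal (fun k => if k = z0 then x i0 else 1) with hD'
  set z₂ : n → A := fun j => (if j = z0 then r else 1) * x (σ j) with hz₂
  have hz₂z0 : z₂ z0 = 1 := by
    simp only [hz₂, if_pos rfl, hσ, Equiv.swap_apply_left, hr]
    exact_mod_cast Units.inv_mul_eq_one.mpr hx.unit_spec.symm
  set w : n → A := fun j => if j = z0 then 0 else -z₂ j with hw
  have hwz0 : w z0 = 0 := by simp [hw]
  refine ⟨cl z0 w * (D * pm σ), pm σ⁻¹ * (D' * cl z0 (-w)), ?_, ?_, ?_⟩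
  · have hDD' : D * D' = 1 := by
      rw [hD, hD', diagonal_mul_diagonal]
      have he : (fun k => (if k = z0 then r else 1) * if k = z0 then x i0 else 1)
          = fun _ => (1 : A) := by
        funext k
        by_cases h : k = z0
        · simp only [h, if_pos rfl, hr]
          exact_mod_cast Units.inv_mul_eq_one.mpr hx.unit_spec.symm
        · simp [h]
      rw [he, diagonal_one]
    calc cl z0 w * (D * pm σ) * (pm σ⁻¹ * (D' * cl z0 (-w)))
        = cl z0 w * (D * ((pm σ * pm σ⁻¹) * (D' * cl z0 (-w)))) := by
          simp only [Matrix.mul_assoc]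
      _ = cl z0 w * (D * (D' * cl z0 (-w))) := by rw [(pm_mul_pm_inv σ).1]; simp
      _ = cl z0 w * ((D * D') * cl z0 (-w)) := by simp only [Matrix.mul_assoc]
      _ = cl z0 w * cl z0 (-w) := by rw [hDD']; simp
      _ = 1 := (cl_inv z0 w hwz0).1
  · have hD'D : D' * D = 1 := by
      rw [hD, hD', diagonal_mul_diagonal]
      have he : (fun k => (if k = z0 then x i0 else 1) * if k = z0 then r else 1)
          = fun _ => (1 : A) := by
        funext k
        by_cases h : k = z0
        · simp only [h, if_pos rfl, hr]
          exact_mod_cast Units.mul_inv_eq_one.mpr hx.unit_spec.symm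
        · simp [h]
      rw [he, diagonal_one]
    calc pm σ⁻¹ * (D' * cl z0 (-w)) * (cl z0 w * (D * pm σ))
        = pm σ⁻¹ * (D' * ((cl z0 (-w) * cl z0 w) * (D * pm σ))) := by
          simp only [Matrix.mul_assoc]
      _ = pm σ⁻¹ * (D' * (D * pm σ)) := by rw [(cl_inv z0 w hwz0).2]; simp
      _ = pm σ⁻¹ * ((D' * D) * pm σ) := by simp only [Matrix.mul_assoc]
      _ = pm σ⁻¹ * pm σ := by rw [hD'D]; simp
      _ = 1 := (pm_mul_pm_inv σ).2
  · rw [← Matrix.mulVec_mulVec, ← Matrix.mulVec_mulVec]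
    have h1 : (pm σ : Matrix n n A) *ᵥ x = fun i => x (σ⁻¹ i) := pm_mulVec σ x
    have hσinv : σ⁻¹ = σ := by rw [hσ]; exact Equiv.swap_inv z0 i0
    have h2 : D *ᵥ (fun i => x (σ⁻¹ i)) = z₂ := by
      funext j
      rw [hD, mulVec_diagonal]
      simp [hz₂, hσinv]
    rw [h1, h2, cl_mulVec, hz₂z0]
    funext j
    by_cases h : j = z0
    · simp [h, hz₂z0, hw, Pi.single_apply]
    · simp [hw, h, Pi.single_apply]

end Good

section Block

variable {m : ℕ}

/-- block symplectic matrix -/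
def Jb (A : Type*) [Ring A] (m : ℕ) : Matrix (Fin m ⊕ Fin m) (Fin m ⊕ Fin m) A :=
  fromBlocks 0 1 (-1) 0

theorem Jb_mulVec (a b : Fin m → A) :
    Jb A m *ᵥ Sum.elim a b = Sum.elim b (-a) := by
  rw [Jb, fromBlocks_mulVec]
  simp [neg_mulVec]

theorem star_elim (a b : Fin m → A) :
    star (Sum.elim a b) = Sum.elim (star a) (star b) := by
  funext i
  cases i <;> simp

theorem length_elim (a b : Fin m → A) :
    star (Sum.elim a b) ⬝ᵥ Jb A m *ᵥ Sum.elim a b = star a ⬝ᵥ b - star b ⬝ᵥ a := by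
  rw [star_elim, Jb_mulVec, sumElim_dotProduct_sumElim, dotProduct_neg, sub_eq_add_neg]

theorem star_length (u : Fin m ⊕ Fin m → A) :
    star (star u ⬝ᵥ Jb A m *ᵥ u) = -(star u ⬝ᵥ Jb A m *ᵥ u) := by
  have hu : u = Sum.elim (u ∘ Sum.inl) (u ∘ Sum.inr) := (Sum.elim_comp_inl_inr u).symm
  rw [hu, length_elim, star_sub]
  have h1 : star (star (u ∘ Sum.inl) ⬝ᵥ (u ∘ Sum.inr)) = star (u ∘ Sum.inr) ⬝ᵥ (u ∘ Sum.inl) := by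
    rw [star_dotProduct]; simp
  have h2 : star (star (u ∘ Sum.inr) ⬝ᵥ (u ∘ Sum.inl)) = star (u ∘ Sum.inl) ⬝ᵥ (u ∘ Sum.inr) := by
    rw [star_dotProduct]; simp
  rw [h1, h2]
  abel

theorem good_Jb : Good (Jb A m) (Jb A m) (-(Jb A m)) := by
  have hJJ : Jb A m * Jb A m = -1 := by
    rw [Jb, fromBlocks_multiply]
    simp [← fromBlocks_one, fromBlocks_neg]
  have hJH : (Jb A m)ᴴ = -(Jb A m) := by
    rw [Jb, fromBlocks_conjTranspose]
    simp [fromBlocks_neg]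
  refine ⟨?_, ?_, ?_⟩
  · rw [Matrix.mul_neg, hJJ]; simp
  · rw [Matrix.neg_mul, hJJ]; simp
  · rw [hJH, Matrix.neg_mul, hJJ, Matrix.neg_mul]; simp

theorem good_blockDiag (g g' : Matrix (Fin m) (Fin m) A) (h1 : g * g' = 1) (h2 : g' * g = 1) :
    Good (Jb A m) (fromBlocks g 0 0 g'ᴴ) (fromBlocks g' 0 0 gᴴ) := by
  have hgH : gᴴ * g'ᴴ = 1 := by rw [← conjTranspose_mul, h2, conjTranspose_one]
  have hg'H : g'ᴴ * gᴴ = 1 := by rw [← conjTranspose_mul, h1, conjTranspose_one]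
  refine ⟨?_, ?_, ?_⟩
  · rw [fromBlocks_multiply]
    simp [h1, hg'H, ← fromBlocks_one]
  · rw [fromBlocks_multiply]
    simp [h2, hgH, ← fromBlocks_one]
  · rw [Jb, fromBlocks_conjTranspose, fromBlocks_multiply, fromBlocks_multiply]
    simp [hgH, h2]

theorem good_lower (c : Matrix (Fin m) (Fin m) A) (hc : cᴴ = c) :
    Good (Jb A m) (fromBlocks 1 0 c 1) (fromBlocks 1 0 (-c) 1) := by
  refine ⟨?_, ?_, ?_⟩
  · rw [fromBlocks_multiply]
    simp [← fromBlocks_one]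
  · rw [fromBlocks_multiply]
    simp [← fromBlocks_one]
  · rw [Jb, fromBlocks_conjTranspose, fromBlocks_multiply, fromBlocks_multiply]
    simp [hc]

/-- the normal-form target vector -/
def tgt (z0 : Fin m) (h : A) : Fin m ⊕ Fin m → A :=
  Sum.elim (Pi.single z0 1) (Pi.single z0 h)

theorem star_single_one (z0 : Fin m) :
    star (Pi.single z0 (1 : A) : Fin m → A) = Pi.single z0 1 := by
  funext j
  rw [Pi.star_apply]
  by_cases hj : j = z0
  · subst hj; rw [Pi.single_eq_same, star_one]
  · rw [Pi.single_eq_of_ne hj]; simp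

theorem key_top (h2 : IsUnit (2 : A)) (hm : 0 < m) (u : Fin m ⊕ Fin m → A)
    (i0 : Fin m) (hx : IsUnit (u (Sum.inl i0))) :
    ∃ X X' : Matrix (Fin m ⊕ Fin m) (Fin m ⊕ Fin m) A, Good (Jb A m) X X' ∧
      X *ᵥ u = tgt ⟨0, hm⟩ (↑h2.unit⁻¹ * (star u ⬝ᵥ Jb A m *ᵥ u)) := by
  classical
  set z0 : Fin m := ⟨0, hm⟩ with hz0
  set L : A := star u ⬝ᵥ Jb A m *ᵥ u with hLdef
  have hLs : star L = -L := star_length u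
  set h : A := ↑h2.unit⁻¹ * L with hhdef
  have e2 : (↑h2.unit : A) = 2 := h2.unit_spec
  have hinv_comm : ∀ a : A, a * ↑h2.unit⁻¹ = ↑h2.unit⁻¹ * a := by
    intro a
    have h2c : (2 : A) * a = a * 2 := by rw [two_mul, mul_two]
    calc a * ↑h2.unit⁻¹ = (↑h2.unit⁻¹ * ↑h2.unit) * (a * ↑h2.unit⁻¹) := by
          rw [Units.inv_mul]; simp
      _ = ↑h2.unit⁻¹ * ((↑h2.unit * a) * ↑h2.unit⁻¹) := by
          simp only [mul_assoc]
      _ = ↑h2.unit⁻¹ * ((a * ↑h2.unit) * ↑h2.unit⁻¹) := by rw [e2, h2c]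
      _ = ↑h2.unit⁻¹ * (a * (↑h2.unit * ↑h2.unit⁻¹)) := by simp only [mul_assoc]
      _ = ↑h2.unit⁻¹ * a := by rw [Units.mul_inv]; simp
  have hstar2 : star (2 : A) = 2 := by
    rw [show (2 : A) = 1 + 1 by norm_num, star_add, star_one]
  have h21 : (2 : A) * ↑h2.unit⁻¹ = 1 := by
    have hmi := h2.unit.mul_inv
    rwa [e2] at hmi
  have hstar_inv2 : star (↑h2.unit⁻¹ : A) = ↑h2.unit⁻¹ := by
    have hl : star (↑h2.unit⁻¹ : A) * 2 = 1 := by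
      have hmi := congrArg star h2.unit.mul_inv
      rw [StarMul.star_mul, star_one, e2, hstar2] at hmi
      exact hmi
    calc star (↑h2.unit⁻¹ : A) = star (↑h2.unit⁻¹ : A) * ((2 : A) * ↑h2.unit⁻¹) := by
          rw [h21, mul_one]
      _ = (star (↑h2.unit⁻¹ : A) * 2) * ↑h2.unit⁻¹ := by rw [mul_assoc]
      _ = ↑h2.unit⁻¹ := by rw [hl, one_mul]
  have hstar_h : star h = -h := by
    rw [hhdef, StarMul.star_mul, hstar_inv2, hLs, neg_mul, hinv_comm]
  have hhh : h + h = L := by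
    have h2h : (2 : A) * h = L := by
      rw [hhdef, ← mul_assoc, h21, one_mul]
    rw [← h2h, two_mul]
  obtain ⟨g, g', hgg', hg'g, hgx⟩ := gl_trans z0 i0 (u ∘ Sum.inl) hx
  set y' : Fin m → A := g'ᴴ *ᵥ (u ∘ Sum.inr) with hy'
  have hu1 : fromBlocks g 0 0 g'ᴴ *ᵥ u = Sum.elim (Pi.single z0 1) y' := by
    conv_lhs => rw [← Sum.elim_comp_inl_inr u]
    rw [fromBlocks_mulVec]
    simp [hgx, hy']
  have good1 := good_blockDiag g g' hgg' hg'g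
  have hlen1 : star (Sum.elim (Pi.single z0 1) y') ⬝ᵥ
      Jb A m *ᵥ Sum.elim (Pi.single z0 1) y' = L := by
    rw [← hu1]
    exact good1.len u
  rw [length_elim, star_single_one, single_dotProduct, one_mul, dotProduct_single, mul_one,
    Pi.star_apply] at hlen1
  set d : Fin m → A := fun j => (if j = z0 then h else 0) - y' j with hd
  have hdz0 : star (d z0) = d z0 := by
    have e1 : star (y' z0) = y' z0 - L := by rw [← hlen1]; abel
    have hdz : d z0 = h - y' z0 := by simp [hd]
    rw [hdz, star_sub, hstar_h, e1, ← hhh]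
    abel
  set c : Matrix (Fin m) (Fin m) A :=
    Matrix.of (fun j k => if k = z0 then d j else if j = z0 then star (d k) else 0) with hc
  have hcH : cᴴ = c := by
    ext j k
    rw [conjTranspose_apply]
    by_cases hj : j = z0 <;> by_cases hk : k = z0
    · subst hj; subst hk
      simp [hc, hdz0]
    · subst hj
      simp [hc, hk]
    · subst hk
      simp [hc, hj]
    · simp [hc, hj, hk]
  have good2 := good_lower c hcH
  have hu2 : fromBlocks 1 0 c 1 *ᵥ Sum.elim (Pi.single z0 1) y' = tgt z0 h := by
    rw [fromBlocks_mulVec]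
    have htop : (1 : Matrix (Fin m) (Fin m) A) *ᵥ Pi.single z0 1 + 0 *ᵥ y' = Pi.single z0 1 := by
      rw [one_mulVec, zero_mulVec, add_zero]
    have hbot : c *ᵥ Pi.single z0 1 + (1 : Matrix (Fin m) (Fin m) A) *ᵥ y' = Pi.single z0 h := by
      rw [mulVec_single, one_mulVec]
      funext j
      by_cases hjz : j = z0 <;> simp [hc, hd, hjz, Pi.single_apply]
    simp only [Sum.elim_comp_inl, Sum.elim_comp_inr]
    rw [htop, hbot, tgt]
  refine ⟨fromBlocks 1 0 c 1 * fromBlocks g 0 0 g'ᴴ,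
    fromBlocks g' 0 0 gᴴ * fromBlocks 1 0 (-c) 1, good2.mul good1, ?_⟩
  rw [← mulVec_mulVec, hu1, hu2]

theorem key (h2 : IsUnit (2 : A)) (hm : 0 < m) (u : Fin m ⊕ Fin m → A)
    (hu : ∃ i, IsUnit (u i)) :
    ∃ X X' : Matrix (Fin m ⊕ Fin m) (Fin m ⊕ Fin m) A, Good (Jb A m) X X' ∧
      X *ᵥ u = tgt ⟨0, hm⟩ (↑h2.unit⁻¹ * (star u ⬝ᵥ Jb A m *ᵥ u)) := by
  obtain ⟨i, hi⟩ := hu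
  cases i with
  | inl i0 => exact key_top h2 hm u i0 hi
  | inr i0 =>
    have hJu : Jb A m *ᵥ u = Sum.elim (u ∘ Sum.inr) (-(u ∘ Sum.inl)) := by
      conv_lhs => rw [← Sum.elim_comp_inl_inr u]
      exact Jb_mulVec _ _
    have hunit : IsUnit ((Jb A m *ᵥ u) (Sum.inl i0)) := by
      rw [hJu]; simpa using hi
    obtain ⟨X, X', hG, hX⟩ := key_top h2 hm (Jb A m *ᵥ u) i0 hunit
    have hlen : star (Jb A m *ᵥ u) ⬝ᵥ Jb A m *ᵥ (Jb A m *ᵥ u) = star u ⬝ᵥ Jb A m *ᵥ u :=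
      good_Jb.len u
    refine ⟨X * Jb A m, -(Jb A m) * X', hG.mul good_Jb, ?_⟩
    rw [← mulVec_mulVec, hX, hlen]

end Block

section Reindex

variable {m : ℕ}

/-- the reindexing equivalence -/
def eqv (m : ℕ) : (Fin m ⊕ Fin m) ≃ Fin (2 * m) :=
  finSumFinEquiv.trans (finCongr (two_mul m).symm)

theorem eqv_inl (i : Fin m) : ((eqv m (Sum.inl i) : Fin (2 * m)) : ℕ) = (i : ℕ) := by
  simp [eqv]

theorem eqv_inr (i : Fin m) : ((eqv m (Sum.inr i) : Fin (2 * m)) : ℕ) = m + (i : ℕ) := by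
  simp [eqv]
  omega

end Reindex

end Stmt7Aux

namespace Stmt7Aux

variable {A : Type*} [Ring A] [StarRing A] {m : ℕ}

theorem std_eq_Jb :
    stdSymplectic A m = (Jb A m).submatrix ⇑(eqv m).symm ⇑(eqv m).symm := by
  have key : ∀ a b : Fin m ⊕ Fin m,
      stdSymplectic A m (eqv m a) (eqv m b) = Jb A m a b := by
    rintro (i | i) (j | j)
    · have h1 : ¬(((eqv m (Sum.inl i) : Fin (2 * m)) : ℕ) + m
          = ((eqv m (Sum.inl j) : Fin (2 * m)) : ℕ)) := by
        rw [eqv_inl, eqv_inl]; have := j.isLt; omega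
      have h2 : ¬(((eqv m (Sum.inl j) : Fin (2 * m)) : ℕ) + m
          = ((eqv m (Sum.inl i) : Fin (2 * m)) : ℕ)) := by
        rw [eqv_inl, eqv_inl]; have := i.isLt; omega
      rw [stdSymplectic, of_apply, if_neg h1, if_neg h2]
      simp [Jb]
    · by_cases hij : i = j
      · subst hij
        have h1 : (((eqv m (Sum.inl i) : Fin (2 * m)) : ℕ) + m
            = ((eqv m (Sum.inr i) : Fin (2 * m)) : ℕ)) := by
          rw [eqv_inl, eqv_inr]; omega
        rw [stdSymplectic, of_apply, if_pos h1]
        simp [Jb, one_apply]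
      · have h1 : ¬(((eqv m (Sum.inl i) : Fin (2 * m)) : ℕ) + m
            = ((eqv m (Sum.inr j) : Fin (2 * m)) : ℕ)) := by
          rw [eqv_inl, eqv_inr]
          intro hcon
          exact hij (Fin.ext (by omega))
        have h2 : ¬(((eqv m (Sum.inr j) : Fin (2 * m)) : ℕ) + m
            = ((eqv m (Sum.inl i) : Fin (2 * m)) : ℕ)) := by
          rw [eqv_inl, eqv_inr]; have := i.isLt; omega
        rw [stdSymplectic, of_apply, if_neg h1, if_neg h2]
        simp [Jb, one_apply, hij]
    · by_cases hij : i = j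
      · subst hij
        have h1 : ¬(((eqv m (Sum.inr i) : Fin (2 * m)) : ℕ) + m
            = ((eqv m (Sum.inl i) : Fin (2 * m)) : ℕ)) := by
          rw [eqv_inl, eqv_inr]; have := i.isLt; omega
        have h2 : (((eqv m (Sum.inl i) : Fin (2 * m)) : ℕ) + m
            = ((eqv m (Sum.inr i) : Fin (2 * m)) : ℕ)) := by
          rw [eqv_inl, eqv_inr]; omega
        rw [stdSymplectic, of_apply, if_neg h1, if_pos h2]
        simp [Jb, one_apply]
      · have h1 : ¬(((eqv m (Sum.inr i) : Fin (2 * m)) : ℕ) + m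
            = ((eqv m (Sum.inl j) : Fin (2 * m)) : ℕ)) := by
          rw [eqv_inl, eqv_inr]; have := j.isLt; omega
        have h2 : ¬(((eqv m (Sum.inl j) : Fin (2 * m)) : ℕ) + m
            = ((eqv m (Sum.inr i) : Fin (2 * m)) : ℕ)) := by
          rw [eqv_inl, eqv_inr]
          intro hcon
          exact hij (Fin.ext (by omega))
        rw [stdSymplectic, of_apply, if_neg h1, if_neg h2]
        have hji : ¬ j = i := fun hcon => hij hcon.symm
        simp [Jb, one_apply, hji, hij]
    · have h1 : ¬(((eqv m (Sum.inr i) : Fin (2 * m)) : ℕ) + m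
          = ((eqv m (Sum.inr j) : Fin (2 * m)) : ℕ)) := by
        rw [eqv_inr, eqv_inr]; have := i.isLt; omega
      have h2 : ¬(((eqv m (Sum.inr j) : Fin (2 * m)) : ℕ) + m
          = ((eqv m (Sum.inr i) : Fin (2 * m)) : ℕ)) := by
        rw [eqv_inr, eqv_inr]; have := j.isLt; omega
      rw [stdSymplectic, of_apply, if_neg h1, if_neg h2]
      simp [Jb]
  ext p q
  have hk := key ((eqv m).symm p) ((eqv m).symm q)
  rw [Equiv.apply_symm_apply, Equiv.apply_symm_apply] at hk
  rw [submatrix_apply, ← hk]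

theorem dot_eqv (a b : Fin (2 * m) → A) :
    a ⬝ᵥ b = (a ∘ eqv m) ⬝ᵥ (b ∘ eqv m) := by
  simp only [dotProduct]
  exact (Fintype.sum_equiv (eqv m) _ _ (fun x => rfl)).symm

theorem len_eqv (w : Fin (2 * m) → A) :
    star w ⬝ᵥ stdSymplectic A m *ᵥ w
      = star (w ∘ eqv m) ⬝ᵥ Jb A m *ᵥ (w ∘ eqv m) := by
  rw [std_eq_Jb, submatrix_mulVec_equiv, dot_eqv]
  congr 1
  funext x
  simp

end Stmt7Aux


open Stmt7Aux

/-- Let `A` be a local ring with involution `*` such that `2` is a unit,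
`a - a*` is a non-unit for every `a`, and the Jacobson radical (= set of non-units) is
nilpotent.  Let `m ≥ 1` and let `u, v ∈ A^{2m}` be unimodular column vectors with the same
length `uᴴJ₀u = vᴴJ₀v`.  Then some element `X` of the unitary group `U_{2m}(A)`
(i.e. `XᴴJ₀X = J₀`) satisfies `X·u = v`: the unitary group acts transitively on unimodular
vectors of a given length. -/
theorem stmt7 {A : Type*} [Ring A] [StarRing A] [IsLocalRing A]
    (h2 : IsUnit (2 : A)) (hsk : ∀ a : A, a - star a ∈ nonunits A)
    (hnil : ∃ e : ℕ, 0 < e ∧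
      ∀ l : List A, l.length = e → (∀ x ∈ l, x ∈ nonunits A) → l.prod = 0)
    {m : ℕ} (hm : 1 ≤ m)
    (u v : Fin (2 * m) → A)
    (hu : ∃ i, IsUnit (u i)) (hv : ∃ i, IsUnit (v i))
    (hlen : star u ⬝ᵥ (stdSymplectic A m).mulVec u = star v ⬝ᵥ (stdSymplectic A m).mulVec v) :
    ∃ X : Matrix (Fin (2 * m)) (Fin (2 * m)) A,
      Xᴴ * stdSymplectic A m * X = stdSymplectic A m ∧ X.mulVec u = v := by
  classical
  have hm' : 0 < m := hm
  set u' : Fin m ⊕ Fin m → A := u ∘ eqv m with hu'def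
  set v' : Fin m ⊕ Fin m → A := v ∘ eqv m with hv'def
  have hu' : ∃ i, IsUnit (u' i) := by
    obtain ⟨i, hi⟩ := hu
    exact ⟨(eqv m).symm i, by simpa [hu'def] using hi⟩
  have hv' : ∃ i, IsUnit (v' i) := by
    obtain ⟨i, hi⟩ := hv
    exact ⟨(eqv m).symm i, by simpa [hv'def] using hi⟩
  have hlen' : star u' ⬝ᵥ Jb A m *ᵥ u' = star v' ⬝ᵥ Jb A m *ᵥ v' :=
    (len_eqv u).symm.trans (hlen.trans (len_eqv v))
  obtain ⟨Xu, Xu', gu, hXu⟩ := key h2 hm' u' hu'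
  obtain ⟨Xv, Xv', gv, hXv⟩ := key h2 hm' v' hv'
  rw [hlen'] at hXu
  have gY : Good (Jb A m) (Xv' * Xu) (Xu' * Xv) := gv.inv.mul gu
  have hYu : (Xv' * Xu) *ᵥ u' = v' := by
    rw [← mulVec_mulVec, hXu, ← hXv, mulVec_mulVec, gv.inv.1, one_mulVec]
  refine ⟨(Xv' * Xu).submatrix ⇑(eqv m).symm ⇑(eqv m).symm, ?_, ?_⟩
  · have hmulsub : ∀ (M N : Matrix (Fin m ⊕ Fin m) (Fin m ⊕ Fin m) A),
        M.submatrix ⇑(eqv m).symm ⇑(eqv m).symm * N.submatrix ⇑(eqv m).symm ⇑(eqv m).symm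
          = (M * N).submatrix ⇑(eqv m).symm ⇑(eqv m).symm := fun M N =>
      submatrix_mul_equiv M N _ (eqv m).symm _
    rw [std_eq_Jb, conjTranspose_submatrix, hmulsub, hmulsub, gY.2.2]
  · rw [show (Matrix.mulVec ((Xv' * Xu).submatrix ⇑(eqv m).symm ⇑(eqv m).symm) u)
        = (Xv' * Xu).submatrix ⇑(eqv m).symm ⇑(eqv m).symm *ᵥ u from rfl,
      submatrix_mulVec_equiv]
    have hus : u ∘ ⇑(eqv m).symm.symm = u' := by rw [Equiv.symm_symm, hu'def]
    rw [hus, hYu]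
    funext p
    simp [hv'def]
end

section
/- Let A be a local ring with involution * such that 2 is a unit, a − a* lies in the Jacobson radical r for every a ∈ A, and r is nilpotent. Let J ∈ M_{2m}(A) be an invertible skew-hermitian matrix, let I be a proper two-sided ideal of A, and let C ∈ M_{2m}(A) be a matrix such that every entry of CᴴJC − J₀ lies in I (i.e., the columns of C form an approximate symplectic system modulo I). Then there exists C' ∈ GL_{2m}(A) such that every entry of C' − C lies in I and C'ᴴJC' = J₀. -/
set_option linter.unusedSectionVars false


open Matrix

namespace Stmt8Aux

variable {A : Type*} [Ring A] [IsLocalRing A]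

lemma unit_of_left_inv {a b : A} (h : b * a = 1) : IsUnit a := by
  have he : (a * b) * (a * b) = a * b := by
    rw [mul_assoc, ← mul_assoc b a b, h, one_mul]
  rcases IsLocalRing.isUnit_or_isUnit_of_add_one
      (a := a * b) (b := 1 - a * b) (by abel) with hu | hu
  · have h1 : a * b = 1 := hu.mul_left_cancel (by rw [he, mul_one])
    exact ⟨⟨a, b, h1, h⟩, rfl⟩
  · exfalso
    have hid : (1 - a * b) * (1 - a * b) = 1 - a * b := by
      rw [sub_mul, mul_sub, mul_sub, he, one_mul, mul_one, one_mul]; abel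
    have h1 : 1 - a * b = 1 := hu.mul_left_cancel (by rw [hid, mul_one])
    have h0 : a * b = 0 := by
      exact sub_eq_self.mp h1
    have : (1 : A) = 0 := by
      calc (1:A) = (b * a) * (b * a) := by rw [h, one_mul]
        _ = b * (a * b) * a := by rw [mul_assoc, ← mul_assoc a b a, ← mul_assoc]
        _ = 0 := by rw [h0, mul_zero, zero_mul]
    exact one_ne_zero this

lemma unit_of_right_inv {a b : A} (h : a * b = 1) : IsUnit a := by
  have hb : IsUnit b := unit_of_left_inv h
  obtain ⟨u, rfl⟩ := hb
  have : a = ↑u⁻¹ := by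
    calc a = a * (↑u * ↑u⁻¹) := by rw [u.mul_inv, mul_one]
      _ = ↑u⁻¹ := by rw [← mul_assoc, h, one_mul]
  rw [this]; exact u⁻¹.isUnit

lemma nonunit_mul_left (a : A) {x : A} (hx : x ∈ nonunits A) : a * x ∈ nonunits A := by
  rw [mem_nonunits_iff] at hx ⊢
  intro hu
  obtain ⟨u, hu'⟩ := hu
  apply hx
  apply unit_of_left_inv (b := ↑u⁻¹ * a)
  rw [mul_assoc, ← hu', u.inv_mul]

lemma nonunit_mul_right (a : A) {x : A} (hx : x ∈ nonunits A) : x * a ∈ nonunits A := by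
  rw [mem_nonunits_iff] at hx ⊢
  intro hu
  obtain ⟨u, hu'⟩ := hu
  apply hx
  apply unit_of_right_inv (b := a * ↑u⁻¹)
  rw [← mul_assoc, ← hu', u.mul_inv]

lemma nonunit_add {x y : A} (hx : x ∈ nonunits A) (hy : y ∈ nonunits A) :
    x + y ∈ nonunits A := by
  rw [mem_nonunits_iff] at hx hy ⊢
  intro hu
  obtain ⟨u, hu'⟩ := hu
  have h1 : ↑u⁻¹ * x + ↑u⁻¹ * y = 1 := by rw [← mul_add, ← hu', u.inv_mul]
  rcases IsLocalRing.isUnit_or_isUnit_of_add_one h1 with h | h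
  · exact hx (by simpa using (Units.isUnit u).mul h)
  · exact hy (by simpa using (Units.isUnit u).mul h)

lemma nonunit_neg {x : A} (hx : x ∈ nonunits A) : -x ∈ nonunits A := by
  rw [mem_nonunits_iff] at hx ⊢
  exact fun h => hx (by simpa using h.neg)

/-- products of lists of `k` nonunits, as an additive subgroup. -/
def Rk (A : Type*) [Ring A] [IsLocalRing A] (k : ℕ) : AddSubgroup A :=
  AddSubgroup.closure
    {a | ∃ l : List A, l.length = k ∧ (∀ x ∈ l, x ∈ nonunits A) ∧ l.prod = a}

lemma mem_Rk_one {x : A} (hx : x ∈ nonunits A) : x ∈ Rk A 1 :=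
  AddSubgroup.subset_closure ⟨[x], rfl, by simpa using hx, by simp⟩

lemma Rk_mul_left (a : A) {k : ℕ} (hk : 0 < k) {x : A} (hx : x ∈ Rk A k) :
    a * x ∈ Rk A k := by
  induction hx using AddSubgroup.closure_induction with
  | mem y hy =>
    obtain ⟨l, hl, hnu, rfl⟩ := hy
    cases l with
    | nil => simp at hl; omega
    | cons z zs =>
      apply AddSubgroup.subset_closure
      refine ⟨(a * z) :: zs, by simpa using hl, ?_, by simp [List.prod_cons, mul_assoc]⟩
      intro w hw
      rcases List.mem_cons.mp hw with h | h
      · exact h ▸ nonunit_mul_left a (hnu z (by simp))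
      · exact hnu w (by simp [h])
  | zero => simpa using (Rk A k).zero_mem
  | add y z _ _ hy hz => rw [mul_add]; exact (Rk A k).add_mem hy hz
  | neg y _ hy => rw [mul_neg]; exact (Rk A k).neg_mem hy

lemma list_prod_mul (a : A) : ∀ l : List A, l ≠ [] → (∀ x ∈ l, x ∈ nonunits A) →
    ∃ l' : List A, l'.length = l.length ∧ (∀ x ∈ l', x ∈ nonunits A) ∧ l'.prod = l.prod * a := by
  intro l
  induction l with
  | nil => intro h; exact absurd rfl h
  | cons z zs ih =>
    intro _ hnu
    cases zs with
    | nil =>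
      exact ⟨[z * a], rfl, by simpa using nonunit_mul_right a (hnu z (by simp)), by simp⟩
    | cons w ws =>
      obtain ⟨l', h1, h2, h3⟩ := ih (by simp) (fun x hx => hnu x (by simp [hx]))
      refine ⟨z :: l', by simpa using h1, ?_, ?_⟩
      · intro x hx
        rcases List.mem_cons.mp hx with h | h
        · exact h ▸ hnu z (by simp)
        · exact h2 x h
      · rw [List.prod_cons, List.prod_cons, h3, mul_assoc]

lemma Rk_mul_right (a : A) {k : ℕ} (hk : 0 < k) {x : A} (hx : x ∈ Rk A k) :
    x * a ∈ Rk A k := by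
  induction hx using AddSubgroup.closure_induction with
  | mem y hy =>
    obtain ⟨l, hl, hnu, rfl⟩ := hy
    obtain ⟨l', h1, h2, h3⟩ := list_prod_mul a l (by rintro rfl; simp at hl; omega) hnu
    exact AddSubgroup.subset_closure ⟨l', h1.trans hl, h2, h3⟩
  | zero => simpa using (Rk A k).zero_mem
  | add y z _ _ hy hz => rw [add_mul]; exact (Rk A k).add_mem hy hz
  | neg y _ hy => rw [neg_mul]; exact (Rk A k).neg_mem hy

lemma Rk_mul_mem {j k : ℕ} {x y : A} (hx : x ∈ Rk A j) (hy : y ∈ Rk A k) :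
    x * y ∈ Rk A (j + k) := by
  induction hx using AddSubgroup.closure_induction with
  | mem x' hx' =>
    induction hy using AddSubgroup.closure_induction with
    | mem y' hy' =>
      obtain ⟨l, hl, hnu, rfl⟩ := hx'
      obtain ⟨l2, hl2, hnu2, rfl⟩ := hy'
      refine AddSubgroup.subset_closure ⟨l ++ l2, by simp [hl, hl2], ?_, by simp⟩
      intro w hw
      rcases List.mem_append.mp hw with h | h
      · exact hnu w h
      · exact hnu2 w h
    | zero => simpa using (Rk A (j+k)).zero_mem
    | add y z _ _ hy hz => rw [mul_add]; exact (Rk A (j+k)).add_mem hy hz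
    | neg y _ hy => rw [mul_neg]; exact (Rk A (j+k)).neg_mem hy
  | zero => simpa using (Rk A (j+k)).zero_mem
  | add y z _ _ hy hz => rw [add_mul]; exact (Rk A (j+k)).add_mem hy hz
  | neg y _ hy => rw [neg_mul]; exact (Rk A (j+k)).neg_mem hy

lemma Rk_succ_le {k : ℕ} (hk : 0 < k) : Rk A (k + 1) ≤ Rk A k := by
  rw [Rk, AddSubgroup.closure_le]
  rintro x ⟨l, hl, hnu, rfl⟩
  cases l with
  | nil => simp at hl
  | cons z zs =>
    cases zs with
    | nil => simp at hl; omega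
    | cons w ws =>
      apply AddSubgroup.subset_closure
      refine ⟨(z * w) :: ws, by simpa using hl, ?_, by simp [List.prod_cons, mul_assoc]⟩
      intro x hx
      rcases List.mem_cons.mp hx with h | h
      · exact h ▸ nonunit_mul_right w (hnu z (by simp))
      · exact hnu x (by simp [h])

lemma Rk_le {i j : ℕ} (hi : 0 < i) (hij : i ≤ j) : Rk A j ≤ Rk A i := by
  induction j with
  | zero => omega
  | succ n ih =>
    rcases Nat.lt_or_ge i (n+1) with h | h
    · exact le_trans (Rk_succ_le (by omega)) (ih (by omega))
    · have : i = n + 1 := by omega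
      subst this; exact le_rfl

lemma Rk_eq_bot {e : ℕ}
    (hnil : ∀ l : List A, l.length = e → (∀ x ∈ l, x ∈ nonunits A) → l.prod = 0)
    {x : A} (hx : x ∈ Rk A e) : x = 0 := by
  have : Rk A e ≤ ⊥ := by
    rw [Rk, AddSubgroup.closure_le]
    rintro y ⟨l, hl, hnu, rfl⟩
    simpa using hnil l hl hnu
  simpa using this hx


open Matrix

section Mat

variable {n : Type*} [Fintype n] [DecidableEq n]
variable {A : Type*} [Ring A] [IsLocalRing A]

lemma I_mat_left (I : TwoSidedIdeal A) (N M : Matrix n n A) (h : ∀ i j, M i j ∈ I) :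
    ∀ i j, (N * M) i j ∈ I := fun i j => by
  rw [Matrix.mul_apply]
  exact I.finsetSum_mem _ _ fun t _ => I.mul_mem_left _ _ (h t j)

lemma I_mat_right (I : TwoSidedIdeal A) (N M : Matrix n n A) (h : ∀ i j, M i j ∈ I) :
    ∀ i j, (M * N) i j ∈ I := fun i j => by
  rw [Matrix.mul_apply]
  exact I.finsetSum_mem _ _ fun t _ => I.mul_mem_right _ _ (h i t)

lemma Rk_mat_left {k : ℕ} (hk : 0 < k) (N M : Matrix n n A) (h : ∀ i j, M i j ∈ Rk A k) :
    ∀ i j, (N * M) i j ∈ Rk A k := fun i j => by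
  rw [Matrix.mul_apply]
  exact AddSubgroup.sum_mem _ fun t _ => Rk_mul_left _ hk (h t j)

lemma Rk_mat_right {k : ℕ} (hk : 0 < k) (N M : Matrix n n A) (h : ∀ i j, M i j ∈ Rk A k) :
    ∀ i j, (M * N) i j ∈ Rk A k := fun i j => by
  rw [Matrix.mul_apply]
  exact AddSubgroup.sum_mem _ fun t _ => Rk_mul_right _ hk (h i t)

lemma Rk_mat_mul {j k : ℕ} (M M' : Matrix n n A) (h : ∀ i j', M i j' ∈ Rk A j)
    (h' : ∀ i j', M' i j' ∈ Rk A k) : ∀ i j', (M * M') i j' ∈ Rk A (j + k) := fun i j' => by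
  rw [Matrix.mul_apply]
  exact AddSubgroup.sum_mem _ fun t _ => Rk_mul_mem (h i t) (h' t j')

lemma mat_pow_entries (M : Matrix n n A) (h : ∀ i j, M i j ∈ Rk A 1) :
    ∀ k, 0 < k → ∀ i j, (M ^ k) i j ∈ Rk A k := by
  intro k
  induction k with
  | zero => omega
  | succ d ih =>
    intro _ i j
    rcases Nat.eq_zero_or_pos d with rfl | hd
    · simpa [pow_one] using h i j
    · rw [pow_succ]
      exact Rk_mat_mul (M ^ d) M (ih hd) h i j

lemma mat_nilpotent {e : ℕ} (he : 0 < e)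
    (hnil : ∀ l : List A, l.length = e → (∀ x ∈ l, x ∈ nonunits A) → l.prod = 0)
    (M : Matrix n n A) (h : ∀ i j, M i j ∈ nonunits A) : M ^ e = 0 := by
  ext i j
  have := mat_pow_entries M (fun i j => mem_Rk_one (h i j)) e he i j
  simpa using Rk_eq_bot hnil this

lemma mat_unit_one_add {e : ℕ} (he : 0 < e)
    (hnil : ∀ l : List A, l.length = e → (∀ x ∈ l, x ∈ nonunits A) → l.prod = 0)
    (M : Matrix n n A) (h : ∀ i j, M i j ∈ nonunits A) : IsUnit (1 + M) :=
  IsNilpotent.isUnit_one_add ⟨e, mat_nilpotent he hnil M h⟩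

end Mat

section Quot

variable {A : Type*} [Ring A] [IsLocalRing A]

/-- the nonunits, as a two-sided ideal. -/
def nuIdeal (A : Type*) [Ring A] [IsLocalRing A] : TwoSidedIdeal A :=
  TwoSidedIdeal.mk' (nonunits A)
    (fun h => by simpa using h)
    (fun hx hy => nonunit_add hx hy)
    (fun hx => nonunit_neg hx)
    (fun hy => nonunit_mul_left _ hy)
    (fun hx => nonunit_mul_right _ hx)


lemma mem_nuIdeal {x : A} : x ∈ nuIdeal A ↔ x ∈ nonunits A := by
  rw [nuIdeal]; exact TwoSidedIdeal.mem_mk' _ _ _ _ _ _ x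

instance : Nontrivial (nuIdeal A).ringCon.Quotient := by
  refine ⟨1, 0, fun h => ?_⟩
  have : (nuIdeal A).ringCon 1 0 := (RingCon.eq _).mp (by exact_mod_cast h)
  have h1 : (1 : A) ∈ nonunits A := mem_nuIdeal.mp this
  exact h1 isUnit_one

noncomputable instance : DivisionRing (nuIdeal A).ringCon.Quotient := by
  apply DivisionRing.ofIsUnitOrEqZero
  intro a
  obtain ⟨x, rfl⟩ := Quotient.exists_rep a
  by_cases hx : IsUnit x
  · left
    exact hx.map (RingCon.mk' (nuIdeal A).ringCon)
  · right
    have : (nuIdeal A).ringCon x 0 := mem_nuIdeal.mpr hx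
    exact (RingCon.eq _).mpr this


variable {n : Type*} [Fintype n] [DecidableEq n]

lemma matrix_mul_eq_one_comm {e : ℕ} (he : 0 < e)
    (hnil : ∀ l : List A, l.length = e → (∀ x ∈ l, x ∈ nonunits A) → l.prod = 0)
    {B D : Matrix n n A} (h : B * D = 1) : D * B = 1 := by
  classical
  set K := (nuIdeal A).ringCon.Quotient
  let π : A →+* K := RingCon.mk' (nuIdeal A).ringCon
  let B' := π.mapMatrix B
  let D' := π.mapMatrix D
  have hBD : B' * D' = 1 := by
    rw [← _root_.map_mul, h, _root_.map_one]
  -- linear maps by right multiplication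
  have hgf : D'.vecMulLinear * B'.vecMulLinear = 1 := by
    apply LinearMap.ext
    intro v
    rw [Module.End.mul_apply, Matrix.vecMulLinear_apply, Matrix.vecMulLinear_apply,
      Matrix.vecMul_vecMul, hBD, Matrix.vecMul_one, Module.End.one_apply]
  have hfg : B'.vecMulLinear * D'.vecMulLinear = 1 := mul_eq_one_comm.mpr hgf
  have hDB : D' * B' = 1 := by
    ext i j
    have := congrFun (congrFun (congrArg DFunLike.coe hfg) (Pi.single i 1)) j
    simp only [Module.End.mul_apply, Matrix.vecMulLinear_apply, Module.End.one_apply] at this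
    rw [Matrix.vecMul_vecMul, Matrix.single_one_vecMul] at this
    rw [show (D' * B') i j = (D' * B').row i j from rfl, this]
    simp [Matrix.one_apply, Pi.single_apply, eq_comm]
  -- pull back
  have hQnu : ∀ i j, (1 - D * B) i j ∈ nonunits A := by
    intro i j
    have : π ((1 - D * B) i j) = 0 := by
      have : π.mapMatrix (1 - D * B) = 0 := by
        rw [map_sub, _root_.map_one, _root_.map_mul, hDB, sub_self]
      calc π ((1 - D * B) i j) = (π.mapMatrix (1 - D * B)) i j := rfl
        _ = 0 := by rw [this]; rfl
    have h0 : (nuIdeal A).ringCon ((1 - D * B) i j) 0 := (RingCon.eq _).mp this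
    exact mem_nuIdeal.mp h0
  set Q := 1 - D * B with hQ
  have hidem : Q * Q = Q := by
    have h1 : D * B * (D * B) = D * B := by
      rw [mul_assoc, ← mul_assoc B D B, h, one_mul]
    rw [hQ, sub_mul, mul_sub, mul_sub, h1, one_mul, mul_one, one_mul]
    abel
  have hpow : ∀ k, Q ^ (k + 1) = Q := by
    intro k
    induction k with
    | zero => rw [pow_one]
    | succ d ih => rw [pow_succ, ih, hidem]
  have hQ0 : Q = 0 := by
    have := mat_nilpotent he hnil Q hQnu
    obtain ⟨d, rfl⟩ : ∃ d, e = d + 1 := ⟨e - 1, by omega⟩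
    rw [hpow d] at this
    exact this
  have : D * B = 1 - Q := by rw [hQ]; abel
  rw [this, hQ0, sub_zero]


end Quot

section J0

open Matrix

def stdSymplectic' (A : Type*) [Ring A] (m : ℕ) : Matrix (Fin (2 * m)) (Fin (2 * m)) A :=
  Matrix.of fun i j =>
    if (i : ℕ) + m = (j : ℕ) then (1 : A)
    else if (j : ℕ) + m = (i : ℕ) then (-1 : A) else 0

variable {A : Type*} [Ring A] {m : ℕ}

lemma stdSymplectic'_apply (i j : Fin (2 * m)) :
    stdSymplectic' A m i j =
      if (i : ℕ) + m = (j : ℕ) then (1 : A)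
      else if (j : ℕ) + m = (i : ℕ) then (-1 : A) else 0 := rfl

lemma J0_mul_J0 (hm : 1 ≤ m) : stdSymplectic' A m * stdSymplectic' A m = -1 := by
  ext i j
  rw [Matrix.mul_apply]
  by_cases hi : (i : ℕ) < m
  · have hk : ((i : ℕ) + m) < 2 * m := by omega
    rw [Finset.sum_eq_single (⟨(i : ℕ) + m, hk⟩ : Fin (2 * m))]
    · have h1 : stdSymplectic' A m i ⟨(i : ℕ) + m, hk⟩ = 1 := by
        rw [stdSymplectic'_apply]; simp
      rw [h1, one_mul, stdSymplectic'_apply]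
      simp only [Matrix.neg_apply, Matrix.one_apply]
      split_ifs with h1' h2' h3' <;> simp_all [Fin.ext_iff] <;> omega
    · intro b _ hb
      have h0 : stdSymplectic' A m i b = 0 := by
        rw [stdSymplectic'_apply]
        have hb' : (i : ℕ) + m ≠ (b : ℕ) := fun h => hb (by simp [Fin.ext_iff, ← h])
        have hb'' : (b : ℕ) + m ≠ (i : ℕ) := by omega
        simp [hb', hb'']
      rw [h0, zero_mul]
    · intro h; exact absurd (Finset.mem_univ _) h
  · have him : m ≤ (i : ℕ) := by omega
    have hk : ((i : ℕ) - m) < 2 * m := by omega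
    rw [Finset.sum_eq_single (⟨(i : ℕ) - m, hk⟩ : Fin (2 * m))]
    · have h1 : stdSymplectic' A m i ⟨(i : ℕ) - m, hk⟩ = -1 := by
        rw [stdSymplectic'_apply]
        have c1 : (i : ℕ) + m ≠ (i : ℕ) - m := by omega
        have c2 : ((i : ℕ) - m) + m = (i : ℕ) := by omega
        simp [c1, c2]
      rw [h1, stdSymplectic'_apply]
      simp only [Matrix.neg_apply, Matrix.one_apply]
      have hij : ((i : ℕ) - m) + m = (j : ℕ) ↔ i = j := by
        rw [Fin.ext_iff]; omega
      split_ifs with h1' h2' h3' <;> simp_all [Fin.ext_iff] <;> omega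
    · intro b _ hb
      have h0 : stdSymplectic' A m i b = 0 := by
        rw [stdSymplectic'_apply]
        have hb' : (i : ℕ) + m ≠ (b : ℕ) := by omega
        have hb'' : (b : ℕ) + m ≠ (i : ℕ) := by
          intro h; exact hb (by simp [Fin.ext_iff]; omega)
        simp [hb', hb'']
      rw [h0, zero_mul]
    · intro h; exact absurd (Finset.mem_univ _) h

lemma J0_isUnit (hm : 1 ≤ m) : IsUnit (stdSymplectic' A m) :=
  ⟨⟨stdSymplectic' A m, -stdSymplectic' A m,
    by rw [mul_neg, J0_mul_J0 hm, neg_neg],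
    by rw [neg_mul, J0_mul_J0 hm, neg_neg]⟩, rfl⟩

lemma J0_conjTranspose [StarRing A] (hm : 1 ≤ m) :
    (stdSymplectic' A m)ᴴ = -(stdSymplectic' A m) := by
  ext i j
  rw [Matrix.conjTranspose_apply, Matrix.neg_apply, stdSymplectic'_apply, stdSymplectic'_apply]
  split_ifs with h1 h2 h3 <;> first
    | (exfalso; omega)
    | simp

end J0

section Newton

open Matrix

variable {A : Type*} [Ring A] [StarRing A] [IsLocalRing A]

lemma central_half (h2 : IsUnit (2 : A)) :
    ∃ c : A, c * 2 = 1 ∧ 2 * c = 1 ∧ (∀ a : A, c * a = a * c) ∧ star c = c := by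
  obtain ⟨u, hu⟩ := h2
  refine ⟨↑u⁻¹, by rw [← hu]; exact u.inv_mul, by rw [← hu]; exact u.mul_inv, ?_, ?_⟩
  · intro a
    have h2a : ∀ b : A, 2 * b = b * 2 := fun b => by rw [two_mul, mul_two]
    have hc2 : (↑u⁻¹ : A) * 2 = 1 := by rw [← hu]; exact u.inv_mul
    have h2c : (2 : A) * ↑u⁻¹ = 1 := by rw [← hu]; exact u.mul_inv
    calc ↑u⁻¹ * a = ↑u⁻¹ * a * (2 * ↑u⁻¹) := by rw [h2c, mul_one]
      _ = ↑u⁻¹ * (a * 2) * ↑u⁻¹ := by rw [← mul_assoc, mul_assoc (↑u⁻¹) a 2]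
      _ = ↑u⁻¹ * (2 * a) * ↑u⁻¹ := by rw [← h2a]
      _ = (↑u⁻¹ * 2) * (a * ↑u⁻¹) := by
          rw [← mul_assoc (↑u⁻¹ : A) 2 a, mul_assoc ((↑u⁻¹ : A) * 2) a ↑u⁻¹]
      _ = a * ↑u⁻¹ := by rw [hc2, one_mul]
  · have hstar2 : star (2 : A) = 2 := by
      rw [show (2 : A) = 1 + 1 from one_add_one_eq_two.symm, star_add, star_one]
    have hc2 : (↑u⁻¹ : A) * 2 = 1 := by rw [← hu]; exact u.inv_mul
    have h2c : (2 : A) * ↑u⁻¹ = 1 := by rw [← hu]; exact u.mul_inv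
    have h1 : star (↑u⁻¹ : A) * 2 = 1 := by
      have := congrArg star h2c
      rwa [StarMul.star_mul, hstar2, star_one] at this
    calc star (↑u⁻¹ : A) = star ↑u⁻¹ * (2 * ↑u⁻¹) := by rw [h2c, mul_one]
      _ = (star ↑u⁻¹ * 2) * ↑u⁻¹ := by rw [mul_assoc]
      _ = ↑u⁻¹ := by rw [h1, one_mul]

lemma newton {e : ℕ} (h2 : IsUnit (2 : A)) (he : 0 < e)
    (hnil : ∀ l : List A, l.length = e → (∀ x ∈ l, x ∈ nonunits A) → l.prod = 0)
    {m : ℕ} (hm : 1 ≤ m)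
    (J : Matrix (Fin (2 * m)) (Fin (2 * m)) A) (hsh : Jᴴ = -J)
    (I : TwoSidedIdeal A) (hInu : ∀ x ∈ I, x ∈ nonunits A) :
    ∀ d k, 0 < k → e ≤ k + d → ∀ D : Matrix (Fin (2 * m)) (Fin (2 * m)) A,
      (∀ i j, (Dᴴ * J * D - stdSymplectic' A m) i j ∈ I) →
      (∀ i j, (Dᴴ * J * D - stdSymplectic' A m) i j ∈ Rk A k) →
      ∃ T : Matrix (Fin (2 * m)) (Fin (2 * m)) A, IsUnit T ∧
        (∀ i j, (D * T - D) i j ∈ I) ∧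
        (D * T)ᴴ * J * (D * T) = stdSymplectic' A m := by
  obtain ⟨c, hc2, h2c, hcomm, hcstar⟩ := central_half h2
  set J₀ := stdSymplectic' A m with hJ₀
  have hJJ : J₀ * J₀ = -1 := J0_mul_J0 hm
  set S : Matrix (Fin (2 * m)) (Fin (2 * m)) A := c • (1 : Matrix _ _ A) with hSdef
  have hSN : ∀ N : Matrix (Fin (2 * m)) (Fin (2 * m)) A, S * N = c • N := fun N => by
    rw [hSdef, Matrix.smul_mul, Matrix.one_mul]
  have hNS : ∀ N : Matrix (Fin (2 * m)) (Fin (2 * m)) A, N * S = S * N := by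
    intro N
    rw [hSN]
    ext i j
    rw [Matrix.mul_apply]
    have hterm : ∀ t, N i t * S t j = if t = j then c * N i t else 0 := by
      intro t
      rw [hSdef, Matrix.smul_apply, Matrix.one_apply, smul_eq_mul]
      split_ifs with h
      · rw [mul_one, hcomm]
      · rw [mul_zero, mul_zero]
    rw [Finset.sum_congr rfl (fun t _ => hterm t),
      Finset.sum_ite_eq' Finset.univ j (fun t => c * N i t)]
    simp [Matrix.smul_apply]
  have hcc : c + c = 1 := by
    have := hc2
    rwa [show (2 : A) = 1 + 1 from one_add_one_eq_two.symm, mul_add, mul_one] at this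
  have hSS : S + S = (1 : Matrix (Fin (2 * m)) (Fin (2 * m)) A) := by
    rw [hSdef, ← add_smul, hcc, one_smul]
  have hSh : Sᴴ = S := by
    ext i j
    rw [Matrix.conjTranspose_apply, hSdef, Matrix.smul_apply, Matrix.smul_apply,
      Matrix.one_apply, Matrix.one_apply, smul_eq_mul, smul_eq_mul]
    by_cases h : j = i
    · subst h; simp [hcstar]
    · have h' : ¬ i = j := fun hh => h hh.symm
      rw [if_neg h, if_neg h', mul_zero, star_zero]
  intro d
  induction d with
  | zero =>
    intro k hk hke D hDI hDk
    have hM0 : Dᴴ * J * D - J₀ = 0 := by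
      ext i j
      have := Rk_le (A := A) he (by omega : e ≤ k) (hDk i j)
      simpa using Rk_eq_bot hnil this
    refine ⟨1, isUnit_one, ?_, ?_⟩
    · intro i j
      rw [Matrix.mul_one, sub_self]
      exact I.zero_mem
    · rw [Matrix.mul_one]
      exact sub_eq_zero.mp hM0
  | succ d ih =>
    intro k hk hke D hDI hDk
    set M := Dᴴ * J * D - J₀ with hMdef
    have hFM : Dᴴ * J * D = J₀ + M := by rw [hMdef]; abel
    have hFh : (Dᴴ * J * D)ᴴ = -(Dᴴ * J * D) := by
      rw [Matrix.conjTranspose_mul, Matrix.conjTranspose_mul,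
        Matrix.conjTranspose_conjTranspose, hsh]
      noncomm_ring
    have hMh : Mᴴ = -M := by
      rw [hMdef, Matrix.conjTranspose_sub, hFh, J0_conjTranspose hm]
      abel
    set X := S * (J₀ * M) with hXdef
    have hXh : Xᴴ = S * (M * J₀) := by
      rw [hXdef, Matrix.conjTranspose_mul, Matrix.conjTranspose_mul, hSh, hMh,
        J0_conjTranspose hm, Matrix.neg_mul, Matrix.mul_neg, neg_neg, hNS]
    -- entries of X in I
    have hXI : ∀ i j, X i j ∈ I := by
      intro i j
      rw [hXdef]
      exact I_mat_left I S _ (I_mat_left I J₀ M hDI) i j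
    have hXk : ∀ i j, X i j ∈ Rk A k := by
      intro i j
      rw [hXdef]
      exact Rk_mat_left hk S _ (Rk_mat_left hk J₀ M hDk) i j
    have hXnu : ∀ i j, X i j ∈ nonunits A := fun i j => hInu _ (hXI i j)
    have hTunit : IsUnit (1 + X) := mat_unit_one_add he hnil X hXnu
    -- expansion
    have hexp : (D * (1 + X))ᴴ * J * (D * (1 + X)) =
        Dᴴ * J * D + (Dᴴ * J * D * X + (Xᴴ * (Dᴴ * J * D) + Xᴴ * (Dᴴ * J * D * X))) := by
      rw [Matrix.conjTranspose_mul, Matrix.conjTranspose_add, Matrix.conjTranspose_one]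
      noncomm_ring
    have hFX : Dᴴ * J * D * X = S * (M * (J₀ * M)) - S * M := by
      have inner : (J₀ + M) * (J₀ * M) = M * (J₀ * M) - M := by
        rw [Matrix.add_mul, ← Matrix.mul_assoc, hJJ, neg_one_mul]
        abel
      calc Dᴴ * J * D * X = (J₀ + M) * (S * (J₀ * M)) := by rw [hFM, hXdef]
        _ = S * ((J₀ + M) * (J₀ * M)) := by
            rw [← Matrix.mul_assoc, hNS, Matrix.mul_assoc]
        _ = S * (M * (J₀ * M)) - S * M := by rw [inner, Matrix.mul_sub]
    have hXF : Xᴴ * (Dᴴ * J * D) = S * ((M * J₀) * M) - S * M := by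
      have inner : (M * J₀) * (J₀ + M) = (M * J₀) * M - M := by
        rw [Matrix.mul_add, Matrix.mul_assoc, hJJ, mul_neg_one]
        abel
      calc Xᴴ * (Dᴴ * J * D) = (S * (M * J₀)) * (J₀ + M) := by rw [hFM, hXh]
        _ = S * ((M * J₀) * (J₀ + M)) := by rw [Matrix.mul_assoc]
        _ = S * ((M * J₀) * M) - S * M := by rw [inner, Matrix.mul_sub]
    have hSM2 : S * M + S * M = M := by
      rw [← Matrix.add_mul, hSS, Matrix.one_mul]
    have key : (D * (1 + X))ᴴ * J * (D * (1 + X)) - J₀ =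
        S * (M * (J₀ * M)) + (S * ((M * J₀) * M) +
          Xᴴ * (S * (M * (J₀ * M)) - S * M)) := by
      have hexp2 : (D * (1 + X))ᴴ * J * (D * (1 + X)) - J₀ =
          M + (Dᴴ * J * D * X + (Xᴴ * (Dᴴ * J * D) + Xᴴ * (Dᴴ * J * D * X))) := by
        rw [hexp, hFM]; abel
      rw [hexp2, hFX, hXF, ← sub_eq_zero]
      have hz : M + ((S * (M * (J₀ * M)) - S * M) + ((S * ((M * J₀) * M) - S * M) +
          Xᴴ * (S * (M * (J₀ * M)) - S * M))) -
          (S * (M * (J₀ * M)) + (S * ((M * J₀) * M) +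
          Xᴴ * (S * (M * (J₀ * M)) - S * M))) = M - (S * M + S * M) := by abel
      rw [hz, hSM2, sub_self]
    -- memberships of the new error
    have hY1I : ∀ i j, (S * (M * (J₀ * M))) i j ∈ I :=
      I_mat_left I S _ (I_mat_right I (J₀ * M) M hDI)
    have hY2I : ∀ i j, (S * ((M * J₀) * M)) i j ∈ I :=
      I_mat_left I S _ (I_mat_left I (M * J₀) M hDI)
    have hXhI : ∀ i j, (Xᴴ) i j ∈ I := by
      rw [hXh]
      exact I_mat_left I S _ (I_mat_right I J₀ M hDI)
    have hY3I : ∀ i j, (Xᴴ * (S * (M * (J₀ * M)) - S * M)) i j ∈ I :=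
      I_mat_right I _ _ hXhI
    have hkk : (0 : ℕ) < k + k := by omega
    have hle : Rk A (k + k) ≤ Rk A (k + 1) := Rk_le (by omega) (by omega)
    have hlek : Rk A (k + k) ≤ Rk A k := Rk_le hk (by omega)
    have hY1k : ∀ i j, (S * (M * (J₀ * M))) i j ∈ Rk A (k + k) :=
      Rk_mat_left hkk S _ (Rk_mat_mul M (J₀ * M) hDk (Rk_mat_left hk J₀ M hDk))
    have hY2k : ∀ i j, (S * ((M * J₀) * M)) i j ∈ Rk A (k + k) :=
      Rk_mat_left hkk S _ (Rk_mat_mul (M * J₀) M (Rk_mat_right hk J₀ M hDk) hDk)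
    have hXhk : ∀ i j, (Xᴴ) i j ∈ Rk A k := by
      rw [hXh]
      exact Rk_mat_left hk S _ (Rk_mat_right hk J₀ M hDk)
    have hY3k : ∀ i j, (Xᴴ * (S * (M * (J₀ * M)) - S * M)) i j ∈ Rk A (k + k) := by
      have hsub : ∀ i j, (S * (M * (J₀ * M)) - S * M) i j ∈ Rk A k := by
        intro i j
        rw [Matrix.sub_apply]
        exact AddSubgroup.sub_mem _ (hlek (hY1k i j)) (Rk_mat_left hk S M hDk i j)
      exact Rk_mat_mul _ _ hXhk hsub
    have hnewI : ∀ i j : Fin (2 * m),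
        (((D * (1 + X))ᴴ * J * (D * (1 + X)) - J₀ : Matrix (Fin (2 * m)) (Fin (2 * m)) A)) i j ∈ I := by
      intro i j
      rw [key, Matrix.add_apply, Matrix.add_apply]
      exact I.add_mem (hY1I i j) (I.add_mem (hY2I i j) (hY3I i j))
    have hnewk : ∀ i j : Fin (2 * m),
        (((D * (1 + X))ᴴ * J * (D * (1 + X)) - J₀ : Matrix (Fin (2 * m)) (Fin (2 * m)) A)) i j ∈ Rk A (k + 1) := by
      intro i j
      rw [key, Matrix.add_apply, Matrix.add_apply]
      exact AddSubgroup.add_mem _ (hle (hY1k i j))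
        (AddSubgroup.add_mem _ (hle (hY2k i j)) (hle (hY3k i j)))
    obtain ⟨T', hT'unit, hT'I, hT'eq⟩ :=
      ih (k + 1) (by omega) (by omega) (D * (1 + X)) hnewI hnewk
    refine ⟨(1 + X) * T', hTunit.mul hT'unit, ?_, ?_⟩
    · intro i j
      rw [← Matrix.mul_assoc D (1 + X) T']
      have hsplit : D * (1 + X) * T' - D =
          (D * (1 + X) * T' - D * (1 + X)) + (D * (1 + X) - D) := by abel
      rw [hsplit, Matrix.add_apply]
      refine I.add_mem (hT'I i j) ?_
      have hDX : D * (1 + X) - D = D * X := by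
        rw [Matrix.mul_add, Matrix.mul_one]; abel
      rw [hDX]
      exact I_mat_left I D X hXI i j
    · rw [← Matrix.mul_assoc D (1 + X) T']
      exact hT'eq

end Newton

end Stmt8Aux

/-- Let `A` be a local ring with involution `*` such that `2` is a unit,
`a - a*` is a non-unit for every `a`, and the Jacobson radical (= set of non-units) is
nilpotent.  Let `J ∈ M_{2m}(A)` be an invertible skew-hermitian matrix, `I` a proper
two-sided ideal, and `C ∈ M_{2m}(A)` a matrix with `CᴴJC ≡ J₀` entrywise mod `I`
(an approximate symplectic system modulo `I`).  Then there is an invertible `C'` with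
`C' ≡ C` entrywise mod `I` and `C'ᴴJC' = J₀`. -/
theorem stmt8 {A : Type*} [Ring A] [StarRing A] [IsLocalRing A]
    (h2 : IsUnit (2 : A)) (hsk : ∀ a : A, a - star a ∈ nonunits A)
    (hnil : ∃ e : ℕ, 0 < e ∧
      ∀ l : List A, l.length = e → (∀ x ∈ l, x ∈ nonunits A) → l.prod = 0)
    {m : ℕ} (hm : 1 ≤ m)
    (J : Matrix (Fin (2 * m)) (Fin (2 * m)) A) (hJ : IsUnit J) (hsh : Jᴴ = -J)
    (I : TwoSidedIdeal A) (hI : I ≠ ⊤)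
    (C : Matrix (Fin (2 * m)) (Fin (2 * m)) A)
    (hC : ∀ i j, (Cᴴ * J * C - stdSymplectic A m) i j ∈ I) :
    ∃ C' : Matrix (Fin (2 * m)) (Fin (2 * m)) A, IsUnit C' ∧
      (∀ i j, (C' - C) i j ∈ I) ∧ C'ᴴ * J * C' = stdSymplectic A m := by
  classical
  obtain ⟨e, he, hnil'⟩ := hnil
  have hstd : stdSymplectic A m = Stmt8Aux.stdSymplectic' A m := rfl
  rw [hstd] at hC ⊢
  set J₀ := Stmt8Aux.stdSymplectic' A m with hJ₀def
  -- every element of I is a nonunit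
  have hInu : ∀ x ∈ I, x ∈ nonunits A := by
    intro x hx
    by_contra h
    have hxu : IsUnit x := by
      simpa [mem_nonunits_iff] using h
    apply hI
    rw [eq_top_iff]
    intro y _
    obtain ⟨u, hu⟩ := hxu
    have h1 : (1 : A) ∈ I := by
      have := I.mul_mem_left (↑u⁻¹) x hx
      rw [← hu, u.inv_mul] at this
      exact this
    have := I.mul_mem_left y 1 h1
    rwa [mul_one] at this
  have hJJ : J₀ * J₀ = -1 := Stmt8Aux.J0_mul_J0 hm
  -- C is invertible
  have hNnu : ∀ i j, (Cᴴ * J * C - J₀) i j ∈ nonunits A := fun i j => hInu _ (hC i j)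
  have hCunit : IsUnit C := by
    set W : Matrix (Fin (2 * m)) (Fin (2 * m)) A := -(J₀ * (Cᴴ * J * C - J₀)) with hWdef
    have hEW : Cᴴ * J * C = J₀ * (1 + W) := by
      rw [Matrix.mul_add, Matrix.mul_one, hWdef, Matrix.mul_neg, ← Matrix.mul_assoc, hJJ,
        neg_one_mul, neg_neg]
      abel
    have hWnu : ∀ i j, W i j ∈ nonunits A := by
      intro i j
      have h1 : (J₀ * (Cᴴ * J * C - J₀)) i j ∈ I :=
        Stmt8Aux.I_mat_left I J₀ _ hC i j
      have h2' : W i j ∈ I := by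
        rw [hWdef, Matrix.neg_apply]
        exact I.neg_mem h1
      exact hInu _ h2'
    have hE : IsUnit (Cᴴ * J * C) := by
      rw [hEW]
      exact (Stmt8Aux.J0_isUnit hm).mul (Stmt8Aux.mat_unit_one_add he hnil' W hWnu)
    obtain ⟨u, hu⟩ := hE
    set L : Matrix (Fin (2 * m)) (Fin (2 * m)) A :=
      (u⁻¹).val * (Cᴴ * J) with hLdef
    have hLC : L * C = 1 := by
      rw [hLdef, Matrix.mul_assoc, ← hu, u.inv_mul]
    have hCL : C * L = 1 :=
      Stmt8Aux.matrix_mul_eq_one_comm he hnil' hLC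
    exact ⟨⟨C, L, hCL, hLC⟩, rfl⟩
  have hC1 : ∀ i j, (Cᴴ * J * C - J₀) i j ∈ Stmt8Aux.Rk A 1 :=
    fun i j => Stmt8Aux.mem_Rk_one (hNnu i j)
  obtain ⟨T, hTu, hTI, hTeq⟩ :=
    Stmt8Aux.newton h2 he hnil' hm J hsh I hInu e 1 one_pos (by omega) C hC hC1
  refine ⟨C * T, hCunit.mul hTu, ?_, hTeq⟩
  intro i j
  exact hTI i j
end

section
/- Let A be a local ring with involution * such that 2 is a unit, a − a* lies in the Jacobson radical r for every a ∈ A, and r is nilpotent. Let I be a proper two-sided ideal of A with I* = I. Then the canonical reduction homomorphism U_{2m}(A) → U_{2m}(A/I) is surjective; concretely, for every matrix Y ∈ M_{2m}(A) such that every entry of YᴴJ₀Y − J₀ lies in I, there exists X ∈ M_{2m}(A) with XᴴJ₀X = J₀ and every entry of X − Y lying in I. -/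
open Matrix

section pw
variable {A : Type*} [Ring A]

/-- `pw I k`: the additive subgroup generated by products of `k` elements of `I`
(with an arbitrary ring element tail). -/
def pw (I : TwoSidedIdeal A) : ℕ → AddSubgroup A
  | 0 => ⊤
  | k+1 => AddSubgroup.closure {x | ∃ a ∈ I, ∃ b ∈ pw I k, x = a * b}

variable (I : TwoSidedIdeal A)

lemma pw_gen {a b : A} (ha : a ∈ I) {k : ℕ} (hb : b ∈ pw I k) : a * b ∈ pw I (k+1) :=
  AddSubgroup.subset_closure ⟨a, ha, b, hb, rfl⟩

lemma mem_pw_one {a : A} (ha : a ∈ I) : a ∈ pw I 1 := by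
  have h0 : (1 : A) ∈ pw I 0 := AddSubgroup.mem_top 1
  simpa using pw_gen I ha h0

lemma pw_one_le {a : A} (ha : a ∈ pw I 1) : a ∈ I := by
  refine AddSubgroup.closure_induction ?_ I.zero_mem (fun x y _ _ hx hy => I.add_mem hx hy)
    (fun x _ hx => I.neg_mem hx) ha
  rintro x ⟨a, ha, b, -, rfl⟩
  exact I.mul_mem_right _ _ ha

lemma pw_mul_right : ∀ k {x : A}, x ∈ pw I k → ∀ r : A, x * r ∈ pw I k := by
  intro k
  induction k with
  | zero => intro x _ r; exact AddSubgroup.mem_top _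
  | succ k ih =>
    intro x hx r
    refine AddSubgroup.closure_induction (p := fun x _ => x * r ∈ pw I (k+1)) ?_ (by simpa using (pw I (k+1)).zero_mem)
      (fun x y _ _ hx hy => by simpa [add_mul] using (pw I (k+1)).add_mem hx hy)
      (fun x _ hx => by simpa [neg_mul] using (pw I (k+1)).neg_mem hx) hx
    rintro x ⟨a, ha, b, hb, rfl⟩
    rw [mul_assoc]
    exact pw_gen I ha (ih hb r)

lemma pw_mul_left : ∀ k {x : A}, x ∈ pw I k → ∀ r : A, r * x ∈ pw I k := by
  intro k
  induction k with
  | zero => intro x _ r; exact AddSubgroup.mem_top _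
  | succ k ih =>
    intro x hx r
    refine AddSubgroup.closure_induction (p := fun x _ => r * x ∈ pw I (k+1)) ?_ (by simpa using (pw I (k+1)).zero_mem)
      (fun x y _ _ hx hy => by simpa [mul_add] using (pw I (k+1)).add_mem hx hy)
      (fun x _ hx => by simpa [mul_neg] using (pw I (k+1)).neg_mem hx) hx
    rintro x ⟨a, ha, b, hb, rfl⟩
    rw [← mul_assoc]
    exact pw_gen I (I.mul_mem_left r a ha) hb

lemma pw_mul_pw : ∀ j k {x y : A}, x ∈ pw I j → y ∈ pw I k → x * y ∈ pw I (j + k) := by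
  intro j
  induction j with
  | zero => intro k x y _ hy; simpa using pw_mul_left I k hy x
  | succ j ih =>
    intro k x y hx hy
    refine AddSubgroup.closure_induction (p := fun x _ => x * y ∈ pw I (j+1+k)) ?_
      (by simpa using (pw I (j+1+k)).zero_mem)
      (fun a b _ _ ha hb => by simpa [add_mul] using (pw I (j+1+k)).add_mem ha hb)
      (fun a _ ha => by simpa [neg_mul] using (pw I (j+1+k)).neg_mem ha) hx
    rintro x ⟨a, ha, b, hb, rfl⟩
    rw [mul_assoc]
    have : j + 1 + k = (j + k) + 1 := by omega
    rw [this]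
    exact pw_gen I ha (ih k hb hy)

lemma pw_succ_le (k : ℕ) : pw I (k+1) ≤ pw I k := by
  induction k with
  | zero => intro x _; exact AddSubgroup.mem_top _
  | succ k ih =>
    intro x hx
    refine AddSubgroup.closure_induction (p := fun x _ => x ∈ pw I (k+1)) ?_
      ((pw I (k+1)).zero_mem) (fun a b _ _ ha hb => (pw I (k+1)).add_mem ha hb)
      (fun a _ ha => (pw I (k+1)).neg_mem ha) hx
    rintro x ⟨a, ha, b, hb, rfl⟩
    exact pw_gen I ha (ih hb)

lemma pw_le_of_le {j k : ℕ} (h : j ≤ k) : pw I k ≤ pw I j := by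
  induction k with
  | zero => have : j = 0 := by omega
            subst this; exact le_rfl
  | succ k ih =>
    rcases Nat.eq_or_lt_of_le h with rfl | h'
    · exact le_rfl
    · exact (pw_succ_le I k).trans (ih (by omega))

lemma pw_star [StarRing A] (hIstar : ∀ a ∈ I, star a ∈ I) :
    ∀ k {x : A}, x ∈ pw I k → star x ∈ pw I k := by
  intro k
  induction k with
  | zero => intro x _; exact AddSubgroup.mem_top _
  | succ k ih =>
    intro x hx
    refine AddSubgroup.closure_induction (p := fun x _ => star x ∈ pw I (k+1)) ?_
      (by simpa using (pw I (k+1)).zero_mem)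
      (fun a b _ _ ha hb => by simpa [star_add] using (pw I (k+1)).add_mem ha hb)
      (fun a _ ha => by simpa [star_neg] using (pw I (k+1)).neg_mem ha) hx
    rintro x ⟨a, ha, b, hb, rfl⟩
    rw [show star (a * b) = star b * star a from star_mul a b]
    have h1 : star a ∈ pw I 1 := mem_pw_one I (hIstar a ha)
    have := pw_mul_pw I k 1 (ih hb) h1
    simpa using this

lemma pw_eq_zero {e : ℕ} (hI : I ≠ ⊤)
    (hnil : ∀ l : List A, l.length = e → (∀ x ∈ l, x ∈ nonunits A) → l.prod = 0)
    {x : A} (hx : x ∈ pw I e) : x = 0 := by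
  have hIn : ∀ a ∈ I, a ∈ nonunits A := by
    intro a ha hu
    exact hI (I.eq_top (by simpa using I.mul_mem_left (↑hu.unit⁻¹) a ha))
  have key : ∀ k, ∀ x ∈ pw I k, ∀ l : List A, l.length + k = e →
      (∀ y ∈ l, y ∈ nonunits A) → l.prod * x = 0 := by
    intro k
    induction k with
    | zero =>
      intro x _ l hl hln
      rw [hnil l (by omega) hln, zero_mul]
    | succ k ih =>
      intro x hx
      refine AddSubgroup.closure_induction
        (p := fun x _ => ∀ l : List A, l.length + (k+1) = e → (∀ y ∈ l, y ∈ nonunits A) → l.prod * x = 0) ?_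
        (fun l _ _ => by simp)
        (fun a b _ _ ha hb l hl hln => by rw [mul_add, ha l hl hln, hb l hl hln, add_zero])
        (fun a _ ha l hl hln => by rw [mul_neg, ha l hl hln, neg_zero]) hx
      rintro x ⟨c, hc, d, hd, rfl⟩ l hl hln
      have hlen : (l ++ [c]).length + k = e := by simp; omega
      have hmem : ∀ y ∈ l ++ [c], y ∈ nonunits A := by
        intro y hy
        rcases List.mem_append.1 hy with h | h
        · exact hln y h
        · rw [List.mem_singleton] at h
          subst h
          exact hIn _ hc
      have := ih d hd (l ++ [c]) hlen hmem
      simpa [List.prod_append, mul_assoc] using this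
  have := key e x hx [] (by simp) (by simp)
  simpa using this

lemma mat_pw_mul {n : ℕ} {a b : ℕ} {M N : Matrix (Fin n) (Fin n) A}
    (hM : ∀ i j, M i j ∈ pw I a) (hN : ∀ i j, N i j ∈ pw I b) (i j : Fin n) :
    (M * N) i j ∈ pw I (a + b) := by
  rw [Matrix.mul_apply]
  exact AddSubgroup.sum_mem _ fun l _ => pw_mul_pw I a b (hM i l) (hN l j)

lemma mat_pw_mul_left {n : ℕ} {b : ℕ} (M : Matrix (Fin n) (Fin n) A) {N : Matrix (Fin n) (Fin n) A}
    (hN : ∀ i j, N i j ∈ pw I b) (i j : Fin n) : (M * N) i j ∈ pw I b := by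
  rw [Matrix.mul_apply]
  exact AddSubgroup.sum_mem _ fun l _ => pw_mul_left I b (hN l j) (M i l)

lemma mat_pw_mul_right {n : ℕ} {a : ℕ} {M : Matrix (Fin n) (Fin n) A}
    (hM : ∀ i j, M i j ∈ pw I a) (N : Matrix (Fin n) (Fin n) A) (i j : Fin n) :
    (M * N) i j ∈ pw I a := by
  rw [Matrix.mul_apply]
  exact AddSubgroup.sum_mem _ fun l _ => pw_mul_right I a (hM i l) (N l j)

end pw

section Jlem
variable {A : Type*} [Ring A] {m : ℕ}

lemma stdSymp_conjT [StarRing A] : (stdSymplectic A m)ᴴ = -stdSymplectic A m := by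
  ext i j
  have hi := i.isLt
  have hj := j.isLt
  simp only [stdSymplectic, conjTranspose_apply, of_apply, neg_apply]
  by_cases h1 : (i : ℕ) + m = (j : ℕ) <;> by_cases h2 : (j : ℕ) + m = (i : ℕ) <;> simp [h1, h2] <;> omega

lemma stdSymp_mul_self : stdSymplectic A m * stdSymplectic A m = (-1 : Matrix _ _ A) := by
  ext i k
  have hi := i.isLt
  have hk := k.isLt
  rw [mul_apply]
  by_cases hlt : (i : ℕ) < m
  · set j₀ : Fin (2 * m) := ⟨(i : ℕ) + m, by omega⟩ with hj₀
    rw [Finset.sum_eq_single j₀ ?side ?notmem]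
    case side =>
      intro b _ hb
      have hbv : (b : ℕ) ≠ (i : ℕ) + m := fun h => hb (Fin.ext (by simp [hj₀, h]))
      have h1 : ¬ ((i : ℕ) + m = (b : ℕ)) := by omega
      have h2 : ¬ ((b : ℕ) + m = (i : ℕ)) := by omega
      simp [stdSymplectic, h1, h2]
    case notmem => intro h; exact absurd (Finset.mem_univ _) h
    have e1 : stdSymplectic A m i j₀ = 1 := by simp [stdSymplectic, hj₀]
    have e2 : stdSymplectic A m j₀ k = if i = k then -1 else 0 := by
      simp only [stdSymplectic, of_apply, hj₀]
      by_cases hik : i = k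
      · subst hik
        have h1 : ¬ ((i : ℕ) + m + m = (i : ℕ)) := by omega
        simp [h1]
      · have hik' : (i : ℕ) ≠ (k : ℕ) := fun h => hik (Fin.ext h)
        have h1 : ¬ ((i : ℕ) + m + m = (k : ℕ)) := by omega
        have h2 : ¬ ((k : ℕ) + m = (i : ℕ) + m) := by omega
        simp [h1, h2, hik, hik'.symm]
    rw [e1, e2, one_mul]
    by_cases hik : i = k <;> simp [hik, Matrix.neg_apply, Matrix.one_apply]
  · set j₀ : Fin (2 * m) := ⟨(i : ℕ) - m, by omega⟩ with hj₀
    rw [Finset.sum_eq_single j₀ ?side ?notmem]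
    case side =>
      intro b _ hb
      have hbv : (b : ℕ) ≠ (i : ℕ) - m := fun h => hb (Fin.ext (by simp [hj₀, h]))
      have h1 : ¬ ((i : ℕ) + m = (b : ℕ)) := by omega
      have h2 : ¬ ((b : ℕ) + m = (i : ℕ)) := by omega
      simp [stdSymplectic, h1, h2]
    case notmem => intro h; exact absurd (Finset.mem_univ _) h
    have e1 : stdSymplectic A m i j₀ = -1 := by
      have h1 : ¬ ((i : ℕ) + m = (i : ℕ) - m) := by omega
      have h2 : (i : ℕ) - m + m = (i : ℕ) := by omega
      simp [stdSymplectic, hj₀, h1, h2]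
    have e2 : stdSymplectic A m j₀ k = if i = k then 1 else 0 := by
      simp only [stdSymplectic, of_apply, hj₀]
      by_cases hik : i = k
      · subst hik
        have h1 : (i : ℕ) - m + m = (i : ℕ) := by omega
        simp [h1]
      · have hik' : (i : ℕ) ≠ (k : ℕ) := fun h => hik (Fin.ext h)
        have h1 : ¬ ((i : ℕ) - m + m = (k : ℕ)) := by omega
        have h2 : ¬ ((k : ℕ) + m = (i : ℕ) - m) := by omega
        simp [h1, h2, hik]
    rw [e1, e2]
    by_cases hik : i = k <;> simp [hik, Matrix.neg_apply, Matrix.one_apply]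

lemma central_mul_smul {half : A} (hc : ∀ a : A, half * a = a * half) {n : ℕ}
    (M N : Matrix (Fin n) (Fin n) A) : M * (half • N) = half • (M * N) := by
  ext i j
  simp only [Matrix.mul_apply, Matrix.smul_apply, smul_eq_mul, Finset.mul_sum]
  refine Finset.sum_congr rfl fun l _ => ?_
  rw [← mul_assoc, ← hc (M i l), mul_assoc]

end Jlem

section newton
variable {A : Type*} [Ring A] [StarRing A]

lemma newton_lift (I : TwoSidedIdeal A) (hIstar : ∀ a ∈ I, star a ∈ I)
    (half : A) (hh : half + half = 1) (hc : ∀ a : A, half * a = a * half)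
    (hs : star half = half) {m : ℕ} (e : ℕ) (hze : ∀ x ∈ pw I e, x = (0 : A)) :
    ∀ d k : ℕ, 1 ≤ k → e ≤ k + d →
      ∀ Y : Matrix (Fin (2 * m)) (Fin (2 * m)) A,
        (∀ i j, (Yᴴ * stdSymplectic A m * Y - stdSymplectic A m) i j ∈ pw I k) →
        ∃ X : Matrix (Fin (2 * m)) (Fin (2 * m)) A,
          Xᴴ * stdSymplectic A m * X = stdSymplectic A m ∧
          ∀ i j, (X - Y) i j ∈ pw I k := by
  intro d
  induction d with
  | zero =>
    intro k hk hek Y hY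
    refine ⟨Y, ?_, fun i j => by rw [sub_self, Matrix.zero_apply]; exact (pw I k).zero_mem⟩
    have h0 : Yᴴ * stdSymplectic A m * Y - stdSymplectic A m = 0 := by
      ext i j
      rw [Matrix.zero_apply]
      exact hze _ (pw_le_of_le I (by omega) (hY i j))
    rwa [sub_eq_zero] at h0
  | succ d ih =>
    intro k hk hek Y hY
    set J := stdSymplectic A m with hJdef
    set E := Yᴴ * J * Y - J with hEdef
    set C := half • (J * E) with hCdef
    set X₀ := Y * (1 + C) with hX₀def
    have hEH : Eᴴ = -E := by
      rw [hEdef, conjTranspose_sub, conjTranspose_mul, conjTranspose_mul,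
        conjTranspose_conjTranspose, hJdef, stdSymp_conjT]
      noncomm_ring
    have hJE : (J * E)ᴴ = E * J := by
      rw [conjTranspose_mul, hEH, hJdef, stdSymp_conjT, neg_mul_neg]
    have hCH : Cᴴ = half • (E * J) := by
      ext i j
      calc Cᴴ i j = star (half * (J * E) j i) := rfl
        _ = star ((J * E) j i) * star half := StarMul.star_mul _ _
        _ = (J * E)ᴴ i j * half := by rw [hs]; rfl
        _ = (E * J) i j * half := by rw [hJE]
        _ = half * (E * J) i j := (hc _).symm
        _ = (half • (E * J)) i j := rfl
    have hJC : J * C = half • (-E) := by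
      rw [hCdef, central_mul_smul hc, ← Matrix.mul_assoc, hJdef, stdSymp_mul_self, neg_one_mul]
    have hCJ : Cᴴ * J = half • (-E) := by
      rw [hCH, Matrix.smul_mul, Matrix.mul_assoc, hJdef, stdSymp_mul_self, mul_neg_one]
    have hhalfE : half • E + half • E = E := by rw [← add_smul, hh, one_smul]
    have Hid : E + Cᴴ * J + J * C = 0 := by
      rw [hJC, hCJ, smul_neg, add_assoc, ← neg_add, hhalfE, add_neg_cancel]
    have hYJY : Yᴴ * J * Y = J + E := by rw [hEdef]; noncomm_ring
    have expand : X₀ᴴ * J * X₀ = (1 + Cᴴ) * (J + E) * (1 + C) := by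
      rw [hX₀def, conjTranspose_mul, conjTranspose_add, conjTranspose_one, ← hYJY]
      noncomm_ring
    have hErr : X₀ᴴ * J * X₀ - J = E * C + Cᴴ * E + Cᴴ * (J * C) + Cᴴ * (E * C) := by
      have expand2 : (1 + Cᴴ) * (J + E) * (1 + C) - J =
          (E + Cᴴ * J + J * C) + (E * C + Cᴴ * E + Cᴴ * (J * C) + Cᴴ * (E * C)) := by
        noncomm_ring
      rw [expand, expand2, Hid, zero_add]
    have hE : ∀ i j, E i j ∈ pw I k := hY
    have hCm : ∀ i j, C i j ∈ pw I k := by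
      intro i j
      show half * (J * E) i j ∈ pw I k
      exact pw_mul_left I k (mat_pw_mul_left I J hE i j) half
    have hCHm : ∀ i j, Cᴴ i j ∈ pw I k := by
      intro i j
      show star (C j i) ∈ pw I k
      exact pw_star I hIstar k (hCm j i)
    have hkk : pw I (k + k) ≤ pw I (k + 1) := pw_le_of_le I (by omega)
    have hErrm : ∀ i j, (X₀ᴴ * J * X₀ - J) i j ∈ pw I (k + 1) := by
      intro i j
      rw [hErr]
      simp only [Matrix.add_apply]
      refine AddSubgroup.add_mem _ (AddSubgroup.add_mem _ (AddSubgroup.add_mem _ ?t1 ?t2) ?t3) ?t4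
      case t1 => exact hkk (mat_pw_mul I hE hCm i j)
      case t2 => exact hkk (mat_pw_mul I hCHm hE i j)
      case t3 =>
        exact hkk (mat_pw_mul I hCHm (fun i j => mat_pw_mul_left I J hCm i j) i j)
      case t4 =>
        exact hkk (mat_pw_mul I hCHm (fun i j => mat_pw_mul_right I hE C i j) i j)
    obtain ⟨X, hX1, hX2⟩ := ih (k + 1) (by omega) (by omega) X₀ hErrm
    refine ⟨X, hX1, ?_⟩
    have hXY : X - Y = (X - X₀) + Y * C := by rw [hX₀def]; noncomm_ring
    intro i j
    rw [hXY, Matrix.add_apply]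
    exact AddSubgroup.add_mem _ (pw_succ_le I k (hX2 i j)) (mat_pw_mul_left I Y hCm i j)

end newton

/-- Let `A` be a local ring with involution `*` such that `2` is a unit,
`a - a*` is a non-unit for every `a`, and the Jacobson radical (= set of non-units) is
nilpotent.  Let `I` be a proper `*`-invariant two-sided ideal of `A`.  Then the canonical
reduction homomorphism `U_{2m}(A) → U_{2m}(A/I)` is surjective: for every `Y ∈ M_{2m}(A)`
with `YᴴJ₀Y ≡ J₀` entrywise mod `I` there is `X` with `XᴴJ₀X = J₀` and `X ≡ Y` entrywise
mod `I`. -/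
theorem stmt9 {A : Type*} [Ring A] [StarRing A] [IsLocalRing A]
    (h2 : IsUnit (2 : A)) (hsk : ∀ a : A, a - star a ∈ nonunits A)
    (hnil : ∃ e : ℕ, 0 < e ∧
      ∀ l : List A, l.length = e → (∀ x ∈ l, x ∈ nonunits A) → l.prod = 0)
    {m : ℕ} (hm : 1 ≤ m)
    (I : TwoSidedIdeal A) (hI : I ≠ ⊤) (hIstar : ∀ a ∈ I, star a ∈ I)
    (Y : Matrix (Fin (2 * m)) (Fin (2 * m)) A)
    (hY : ∀ i j, (Yᴴ * stdSymplectic A m * Y - stdSymplectic A m) i j ∈ I) :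
    ∃ X : Matrix (Fin (2 * m)) (Fin (2 * m)) A,
      Xᴴ * stdSymplectic A m * X = stdSymplectic A m ∧ ∀ i j, (X - Y) i j ∈ I := by
  obtain ⟨e, hepos, hnile⟩ := hnil
  obtain ⟨u, hu⟩ := h2
  set half := (↑u⁻¹ : A) with hhalf
  have h2c : ∀ a : A, 2 * a = a * 2 := fun a => by rw [two_mul, mul_two]
  have hm1 : half * 2 = 1 := by rw [← hu]; exact u.inv_mul
  have h1m : (2 : A) * half = 1 := by rw [← hu]; exact u.mul_inv
  have hc : ∀ a : A, half * a = a * half := by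
    intro a
    have key : half * a * (2 * half) = a * half := by
      rw [← mul_assoc, mul_assoc half a 2, ← h2c, ← mul_assoc, hm1, one_mul]
    rw [← key, h1m, mul_one]
  have hh : half + half = 1 := by rw [← two_mul, h1m]
  have hstar2 : star (2 : A) = 2 := by
    rw [show (2 : A) = 1 + 1 by norm_num, star_add, star_one]
  have hs : star half = half := by
    have h1 : star half * 2 = 1 := by
      calc star half * 2 = star half * star 2 := by rw [hstar2]
        _ = star (2 * half) := (StarMul.star_mul _ _).symm
        _ = 1 := by rw [h1m, star_one]
    calc star half = star half * (2 * half) := by rw [h1m, mul_one]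
      _ = (star half * 2) * half := by rw [mul_assoc]
      _ = half := by rw [h1, one_mul]
  have hze : ∀ x ∈ pw I e, x = (0 : A) := fun x hx => pw_eq_zero I hI hnile hx
  obtain ⟨X, hX1, hX2⟩ := newton_lift I hIstar half hh hc hs (m := m) e hze e 1
    le_rfl (by omega) Y (fun i j => mem_pw_one I (hY i j))
  exact ⟨X, hX1, fun i j => pw_one_le I (hX2 i j)⟩
end

section
/- Let A be a finite local ring with involution * such that 2 is a unit and a − a* lies in the Jacobson radical r for every a ∈ A. Let I be a *-invariant two-sided ideal of A with I² = 0, and let m ≥ 1. Then the kernel of the reduction homomorphism U_{2m}(A) → U_{2m}(A/I), namely the set of matrices X ∈ M_{2m}(A) with XᴴJ₀X = J₀ and all entries of X − 1 lying in I, has cardinality |I|^{2m²−m} · |I ∩ 𝔪|^{2m}, where 𝔪 = {a ∈ r : a* = a}. -/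
open Matrix

section aux
set_option linter.unusedSectionVars false
set_option linter.unusedVariables false
set_option linter.unnecessarySeqFocus false

variable {A : Type*} [Ring A] [StarRing A] {m n : ℕ} (I : TwoSidedIdeal A)

lemma J_mul_self : stdSymplectic A m * stdSymplectic A m = -1 := by
  ext i j
  rw [Matrix.mul_apply, Matrix.neg_apply, Matrix.one_apply]
  have hi2 := i.isLt
  have hj2 := j.isLt
  rcases lt_or_ge (i : ℕ) m with hi | hi
  · rw [Finset.sum_eq_single (⟨(i : ℕ) + m, by omega⟩ : Fin (2 * m))]
    · simp only [stdSymplectic, Matrix.of_apply, Fin.ext_iff]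
      split_ifs <;> simp_all <;> omega
    · intro k _ hk
      have hk' : (k : ℕ) ≠ (i : ℕ) + m := fun h => hk (by exact Fin.ext h)
      have hk2 := k.isLt
      simp only [stdSymplectic, Matrix.of_apply]
      split_ifs <;> first | omega | simp
    · exact fun h => absurd (Finset.mem_univ _) h
  · rw [Finset.sum_eq_single (⟨(i : ℕ) - m, by omega⟩ : Fin (2 * m))]
    · simp only [stdSymplectic, Matrix.of_apply, Fin.ext_iff]
      split_ifs <;> simp_all <;> omega
    · intro k _ hk
      have hk' : (k : ℕ) ≠ (i : ℕ) - m := fun h => hk (by exact Fin.ext h)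
      have hk2 := k.isLt
      simp only [stdSymplectic, Matrix.of_apply]
      split_ifs <;> first | omega | simp
    · exact fun h => absurd (Finset.mem_univ _) h

lemma J_conjTranspose : (stdSymplectic A m)ᴴ = -stdSymplectic A m := by
  ext i j
  have hi2 := i.isLt
  simp only [Matrix.conjTranspose_apply, Matrix.neg_apply, stdSymplectic, Matrix.of_apply]
  split_ifs <;> simp <;> omega

lemma mul_entries_mem {P Q : Matrix (Fin n) (Fin n) A} (hP : ∀ i j, P i j ∈ I) :
    ∀ i j, (Q * P) i j ∈ I := by
  intro i j
  rw [Matrix.mul_apply]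
  exact sum_mem fun k _ => I.mul_mem_left _ _ (hP k j)

lemma entries_mul_mem {P Q : Matrix (Fin n) (Fin n) A} (hP : ∀ i j, P i j ∈ I) :
    ∀ i j, (P * Q) i j ∈ I := by
  intro i j
  rw [Matrix.mul_apply]
  exact sum_mem fun k _ => I.mul_mem_right _ _ (hP i k)

lemma sandwich_zero (hI2 : ∀ a ∈ I, ∀ b ∈ I, a * b = 0)
    {P Q : Matrix (Fin n) (Fin n) A} (M : Matrix (Fin n) (Fin n) A)
    (hP : ∀ i j, P i j ∈ I) (hQ : ∀ i j, Q i j ∈ I) : P * M * Q = 0 := by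
  ext i j
  rw [Matrix.mul_apply, Matrix.zero_apply]
  exact Finset.sum_eq_zero fun k _ => hI2 _ (entries_mul_mem I hP i k) _ (hQ k j)

/-- The kernel subset is in bijection with Hermitian matrices with entries in `I`. -/
noncomputable def equiv1 (hIstar : ∀ a ∈ I, star a ∈ I) (hI2 : ∀ a ∈ I, ∀ b ∈ I, a * b = 0) :
    {X : Matrix (Fin (2 * m)) (Fin (2 * m)) A //
        Xᴴ * stdSymplectic A m * X = stdSymplectic A m ∧ ∀ i j, (X - 1) i j ∈ I} ≃
    {Z : Matrix (Fin (2 * m)) (Fin (2 * m)) A // Zᴴ = Z ∧ ∀ i j, Z i j ∈ I} where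
  toFun X := by
    refine ⟨stdSymplectic A m * (X.1 - 1), ?_, mul_entries_mem I X.2.2⟩
    obtain ⟨X, hX, hXI⟩ := X
    set J := stdSymplectic A m with hJ
    set Y := X - 1 with hY
    have hYH : ∀ i j, Yᴴ i j ∈ I := fun i j => hIstar _ (hXI j i)
    have h0 : Yᴴ * J * Y = 0 := sandwich_zero I hI2 J hYH hXI
    have hX1 : X = 1 + Y := by rw [hY]; abel
    have hexp : Xᴴ * J * X = J + (J * Y + Yᴴ * J) + Yᴴ * J * Y := by
      rw [hX1, conjTranspose_add, conjTranspose_one]; noncomm_ring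
    rw [hexp, h0, add_zero] at hX
    have key : Yᴴ * J = -(J * Y) := by
      have h2 : J + (J * Y + Yᴴ * J) = J + 0 := by rw [hX, add_zero]
      have h3 : J * Y + Yᴴ * J = 0 := by exact add_left_cancel h2
      linear_combination (norm := noncomm_ring) h3
    calc (J * Y)ᴴ = Yᴴ * Jᴴ := by rw [conjTranspose_mul]
      _ = Yᴴ * (-J) := by rw [J_conjTranspose]
      _ = -(Yᴴ * J) := by noncomm_ring
      _ = J * Y := by rw [key, neg_neg]
  invFun Z := by
    refine ⟨1 - stdSymplectic A m * Z.1, ?_, ?_⟩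
    · obtain ⟨Z, hZH, hZI⟩ := Z
      set J := stdSymplectic A m with hJ
      set Y := -(J * Z) with hY
      have hYI : ∀ i j, Y i j ∈ I := by
        intro i j
        rw [hY, Matrix.neg_apply]
        exact neg_mem (mul_entries_mem I hZI i j)
      have hYH : ∀ i j, Yᴴ i j ∈ I := fun i j => hIstar _ (hYI j i)
      have h0 : Yᴴ * J * Y = 0 := sandwich_zero I hI2 J hYH hYI
      have hJY : J * Y = Z := by
        rw [hY]
        calc J * -(J * Z) = -(J * J * Z) := by noncomm_ring
          _ = Z := by rw [J_mul_self]; noncomm_ring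
      have hYHJ : Yᴴ * J = -Z := by
        rw [hY, conjTranspose_neg, conjTranspose_mul, J_conjTranspose]
        calc -(Zᴴ * -J) * J = Zᴴ * (J * J) := by noncomm_ring
          _ = -Z := by rw [J_mul_self, hZH]; noncomm_ring
      have hX1 : (1 : Matrix (Fin (2 * m)) (Fin (2 * m)) A) - J * Z = 1 + Y := by
        rw [hY]; abel
      rw [hX1, conjTranspose_add, conjTranspose_one]
      calc (1 + Yᴴ) * J * (1 + Y) = J + (J * Y + Yᴴ * J) + Yᴴ * J * Y := by noncomm_ring
        _ = J := by rw [h0, hJY, hYHJ]; abel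
    · intro i j
      have h1 : (1 : Matrix (Fin (2 * m)) (Fin (2 * m)) A) - stdSymplectic A m * Z.1 - 1
          = -(stdSymplectic A m * Z.1) := by abel
      rw [h1, Matrix.neg_apply]
      exact neg_mem (mul_entries_mem I Z.2.2 i j)
  left_inv X := by
    apply Subtype.ext
    show (1 : Matrix (Fin (2 * m)) (Fin (2 * m)) A)
        - stdSymplectic A m * (stdSymplectic A m * (X.1 - 1)) = X.1
    calc (1 : Matrix (Fin (2 * m)) (Fin (2 * m)) A)
          - stdSymplectic A m * (stdSymplectic A m * (X.1 - 1))
        = 1 - (stdSymplectic A m * stdSymplectic A m) * (X.1 - 1) := by noncomm_ring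
      _ = X.1 := by rw [J_mul_self]; noncomm_ring
  right_inv Z := by
    apply Subtype.ext
    show stdSymplectic A m * ((1 - stdSymplectic A m * Z.1) - 1) = Z.1
    calc stdSymplectic A m * ((1 - stdSymplectic A m * Z.1) - 1)
        = -((stdSymplectic A m * stdSymplectic A m) * Z.1) := by noncomm_ring
      _ = Z.1 := by rw [J_mul_self]; noncomm_ring

lemma mem_nonunits_of_mem [Nontrivial A] (hI2 : ∀ a ∈ I, ∀ b ∈ I, a * b = 0)
    {a : A} (ha : a ∈ I) : a ∈ nonunits A := by
  intro hu
  obtain ⟨u, rfl⟩ := hu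
  have h1 : (1 : A) ∈ I := by
    have := I.mul_mem_left (↑u⁻¹) _ ha
    rwa [Units.inv_mul] at this
  exact (one_ne_zero : (1 : A) ≠ 0) (by simpa using hI2 1 h1 1 h1)

/-- Hermitian matrices with entries in `I` are parametrized by a free strict upper
triangle in `I` and a free diagonal in `I ∩ 𝔪`. -/
noncomputable def equiv2 [Nontrivial A] (hIstar : ∀ a ∈ I, star a ∈ I)
    (hI2 : ∀ a ∈ I, ∀ b ∈ I, a * b = 0) :
    {Z : Matrix (Fin n) (Fin n) A // Zᴴ = Z ∧ ∀ i j, Z i j ∈ I} ≃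
    ({p : Fin n × Fin n // p.1 < p.2} → I) ×
      (Fin n → {a : A // a ∈ I ∧ a ∈ nonunits A ∧ star a = a}) where
  toFun Z :=
    ⟨fun p => ⟨Z.1 p.1.1 p.1.2, Z.2.2 _ _⟩,
     fun i => ⟨Z.1 i i, Z.2.2 i i, mem_nonunits_of_mem I hI2 (Z.2.2 i i),
       (Matrix.conjTranspose_apply _ _ _).symm.trans (congrFun (congrFun Z.2.1 i) i)⟩⟩
  invFun ud :=
    ⟨Matrix.of fun i j =>
      if h : i < j then (ud.1 ⟨(i, j), h⟩ : A)
      else if h' : j < i then star (ud.1 ⟨(j, i), h'⟩ : A)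
      else (ud.2 i : A), by
        constructor
        · ext i j
          simp only [Matrix.conjTranspose_apply, Matrix.of_apply]
          rcases lt_trichotomy i j with h | h | h
          · rw [dif_neg (asymm h), dif_pos h, dif_pos h, star_star]
          · subst h
            rw [dif_neg (lt_irrefl i), dif_neg (lt_irrefl i)]
            exact (ud.2 i).2.2.2
          · rw [dif_pos h, dif_neg (asymm h), dif_pos h]
        · intro i j
          simp only [Matrix.of_apply]
          rcases lt_trichotomy i j with h | h | h
          · rw [dif_pos h]; exact (ud.1 _).2
          · subst h
            rw [dif_neg (lt_irrefl i), dif_neg (lt_irrefl i)]; exact (ud.2 i).2.1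
          · rw [dif_neg (asymm h), dif_pos h]; exact hIstar _ (ud.1 _).2⟩
  left_inv Z := by
    apply Subtype.ext
    ext i j
    simp only [Matrix.of_apply]
    rcases lt_trichotomy i j with h | h | h
    · rw [dif_pos h]
    · subst h; rw [dif_neg (lt_irrefl i), dif_neg (lt_irrefl i)]
    · rw [dif_neg (asymm h), dif_pos h]
      conv_rhs => rw [← Z.2.1]
      rfl
  right_inv ud := by
    refine Prod.ext (funext fun p => Subtype.ext ?_) (funext fun i => Subtype.ext ?_)
    · show (Matrix.of _ : Matrix (Fin n) (Fin n) A) p.1.1 p.1.2 = _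
      simp only [Matrix.of_apply]
      rw [dif_pos p.2]
    · show (Matrix.of _ : Matrix (Fin n) (Fin n) A) i i = _
      simp only [Matrix.of_apply]
      rw [dif_neg (lt_irrefl i), dif_neg (lt_irrefl i)]

/-- The strict upper triangle of an `n × n` matrix, as a sigma type. -/
def pairEquiv (n : ℕ) : {p : Fin n × Fin n // p.1 < p.2} ≃ Σ j : Fin n, Fin (j : ℕ) where
  toFun p := ⟨p.1.2, ⟨(p.1.1 : ℕ), p.2⟩⟩
  invFun s := ⟨(⟨(s.2 : ℕ), lt_trans s.2.2 s.1.2⟩, s.1), s.2.2⟩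
  left_inv p := rfl
  right_inv s := rfl

lemma card_pairs (m : ℕ) (hm : 1 ≤ m) :
    Nat.card {p : Fin (2 * m) × Fin (2 * m) // p.1 < p.2} = 2 * m ^ 2 - m := by
  rw [Nat.card_congr (pairEquiv (2 * m)), Nat.card_eq_fintype_card, Fintype.card_sigma]
  simp only [Fintype.card_fin]
  rw [Fin.sum_univ_eq_sum_range (fun i => i) (2 * m), Finset.sum_range_id]
  obtain ⟨k, rfl⟩ : ∃ k, m = k + 1 := ⟨m - 1, by omega⟩
  have h1 : 2 * (k + 1) - 1 = 2 * k + 1 := by omega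
  rw [h1]
  have h2 : 2 * (k + 1) * (2 * k + 1) = 2 * ((k + 1) * (2 * k + 1)) := by ring
  rw [h2, Nat.mul_div_cancel_left _ (by norm_num)]
  have h3 : 2 * (k + 1) ^ 2 = (k + 1) * (2 * k + 1) + (k + 1) := by ring
  rw [h3, Nat.add_sub_cancel]

end aux

/-- Let `A` be a finite local ring with involution `*` such that `2` is a unit
and `a - a*` is a non-unit (lies in the Jacobson radical `r` = the set of non-units) for
every `a`.  Let `I` be a `*`-invariant two-sided ideal with `I² = 0` and `m ≥ 1`.  Then the
kernel of the reduction map `U_{2m}(A) → U_{2m}(A/I)`, i.e. the set of `X` with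
`XᴴJ₀X = J₀` and `X ≡ 1` entrywise mod `I`, has cardinality
`|I|^(2m² - m) * |I ∩ 𝔪|^(2m)` where `𝔪 = {a ∈ r : a* = a}`. -/
theorem stmt11 {A : Type*} [Ring A] [StarRing A] [IsLocalRing A] [Finite A]
    (h2 : IsUnit (2 : A)) (hsk : ∀ a : A, a - star a ∈ nonunits A)
    (I : TwoSidedIdeal A) (hIstar : ∀ a ∈ I, star a ∈ I)
    (hI2 : ∀ a ∈ I, ∀ b ∈ I, a * b = 0)
    {m : ℕ} (hm : 1 ≤ m) :
    Nat.card {X : Matrix (Fin (2 * m)) (Fin (2 * m)) A //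
        Xᴴ * stdSymplectic A m * X = stdSymplectic A m ∧ ∀ i j, (X - 1) i j ∈ I} =
      Nat.card I ^ (2 * m ^ 2 - m) *
        Nat.card {a : A // a ∈ I ∧ a ∈ nonunits A ∧ star a = a} ^ (2 * m) := by
  rw [Nat.card_congr ((equiv1 I hIstar hI2).trans (equiv2 I hIstar hI2))]
  rw [Nat.card_prod, Nat.card_fun, Nat.card_fun, card_pairs m hm]
  rw [Nat.card_eq_fintype_card (α := Fin (2 * m)), Fintype.card_fin]
end
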